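/- arXiv:2411.08247 — 4 statements merged into one kernel-verified Lean document; each statement's English description precedes it below -/
import Mathlib

section
/- For every m ≥ 3, the Nimber of Jacob's Ladder JL_m equals the Nimber of the Toggle position P_{0,1}(m,1), which equals the Nimber of the Toggle position P_{1,0}(m,1). -/
namespace Toggle

variable {V : Type*} [Fintype V] [DecidableEq V]

/-- The closed neighborhood `N[v]` of a vertex as a `Finset`. -/
def closedNbhd (G : SimpleGraph V) [DecidableRel G.Adj] (v : V) : Finset V :=
  insert v (G.neighborFinset v)

/-- The result of a Toggle move at `v`: flip the weight of every vertex in `N[v]`. -/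
def move (G : SimpleGraph V) [DecidableRel G.Adj] (ω : V → Bool) (v : V) : V → Bool :=
  fun u => if u ∈ closedNbhd G v then !(ω u) else ω u

/-- Total weight of a position. -/
def weight (ω : V → Bool) : ℕ := (Finset.univ.filter (fun u => ω u = true)).card

/-- Weight of a position over the closed neighborhood of `v`. -/
def nbhdWeight (G : SimpleGraph V) [DecidableRel G.Adj] (ω : V → Bool) (v : V) : ℕ :=
  ((closedNbhd G v).filter (fun u => ω u = true)).card

/-- A Toggle move at `v` is legal iff `ω v = 1` and the move strictly decreases the
weight over `N[v]`. -/
def IsLegal (G : SimpleGraph V) [DecidableRel G.Adj] (ω : V → Bool) (v : V) : Prop :=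
  ω v = true ∧ nbhdWeight G (move G ω v) v < nbhdWeight G ω v

instance (G : SimpleGraph V) [DecidableRel G.Adj] (ω : V → Bool) (v : V) :
    Decidable (IsLegal G ω v) :=
  inferInstanceAs (Decidable (ω v = true ∧ nbhdWeight G (move G ω v) v < nbhdWeight G ω v))

theorem weight_move_lt (G : SimpleGraph V) [DecidableRel G.Adj] {ω : V → Bool} {v : V}
    (h : IsLegal G ω v) : weight (move G ω v) < weight ω := by
  have key : ∀ ψ : V → Bool,
      weight ψ = ((closedNbhd G v).filter (fun u => ψ u = true)).card
        + ((Finset.univ \ closedNbhd G v).filter (fun u => ψ u = true)).card := by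
    intro ψ
    rw [weight, ← Finset.card_union_of_disjoint
      (Finset.disjoint_filter_filter Finset.disjoint_sdiff)]
    congr 1
    ext u
    simp only [Finset.mem_filter, Finset.mem_union, Finset.mem_sdiff, Finset.mem_univ,
      true_and]
    tauto
  have hout : ((Finset.univ \ closedNbhd G v).filter (fun u => move G ω v u = true))
      = ((Finset.univ \ closedNbhd G v).filter (fun u => ω u = true)) := by
    apply Finset.filter_congr
    intro u hu
    rw [Finset.mem_sdiff] at hu
    simp [move, hu.2]
  have h2 := h.2
  rw [key (move G ω v), key ω, hout]
  unfold nbhdWeight at h2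
  omega

/-- Minimal excludant of a finite set of naturals. -/
noncomputable def mex (s : Finset ℕ) : ℕ := sInf {n : ℕ | n ∉ s}

/-- The Nimber (Grundy value) of a Toggle position. -/
noncomputable def grundy (G : SimpleGraph V) [DecidableRel G.Adj] (ω : V → Bool) : ℕ :=
  mex ((Finset.univ.filter (fun v => IsLegal G ω v)).attach.image
    (fun v => grundy G (move G ω v.1)))
termination_by weight ω
decreasing_by
  have hv := v.2
  rw [Finset.mem_filter] at hv
  exact weight_move_lt G hv.2

/-- One legal Toggle move transforms `ω` into `ω'`. -/
def Step (G : SimpleGraph V) [DecidableRel G.Adj] (ω ω' : V → Bool) : Prop :=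
  ∃ v, IsLegal G ω v ∧ ω' = move G ω v

/-- `ω'` is reachable from `ω` by a (possibly empty) sequence of legal moves. -/
def Reach (G : SimpleGraph V) [DecidableRel G.Adj] (ω ω' : V → Bool) : Prop :=
  Relation.ReflTransGen (Step G) ω ω'

/-- `v` is terminally unplayable at `ω`: unplayable at `ω` and at every position
reachable from `ω`. -/
def TerminallyUnplayable (G : SimpleGraph V) [DecidableRel G.Adj] (ω : V → Bool) (v : V) :
    Prop :=
  ∀ ω', Reach G ω ω' → ¬ IsLegal G ω' v

/-- `v` is penultimately unplayable for the initial position `ω₀`: at every position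
reachable from `ω₀`, after any legal move at a vertex `u ∈ N[v]`, the vertex `v` is
terminally unplayable. -/
def PenultimatelyUnplayableAt (G : SimpleGraph V) [DecidableRel G.Adj] (ω₀ : V → Bool)
    (v : V) : Prop :=
  ∀ ω', Reach G ω₀ ω' → ∀ u ∈ closedNbhd G v, IsLegal G ω' u →
    TerminallyUnplayable G (move G ω' u) v

/-- The position `ω₀` is penultimately unplayable if every vertex is. -/
def PenultimatelyUnplayable (G : SimpleGraph V) [DecidableRel G.Adj] (ω₀ : V → Bool) :
    Prop :=
  ∀ v, PenultimatelyUnplayableAt G ω₀ v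

/-- The path graph on `Fin n`, vertices `0, 1, …, n-1` in order. -/
def pathGraph (n : ℕ) : SimpleGraph (Fin n) :=
  SimpleGraph.fromRel (fun a b => (a : ℕ) + 1 = (b : ℕ))

instance (n : ℕ) : DecidableRel (pathGraph n).Adj := fun a b =>
  decidable_of_iff _ (SimpleGraph.fromRel_adj _ a b).symm

/-- The 2×m grid graph `L_{2,m}` (0-indexed rows and columns). -/
def gridGraph (m : ℕ) : SimpleGraph (Fin 2 × Fin m) :=
  SimpleGraph.fromRel (fun a b =>
    (a.1 = b.1 ∧ (a.2 : ℕ) + 1 = (b.2 : ℕ)) ∨ (a.2 = b.2 ∧ (a.1 : ℕ) + 1 = (b.1 : ℕ)))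

instance (m : ℕ) : DecidableRel (gridGraph m).Adj := fun a b =>
  decidable_of_iff _ (SimpleGraph.fromRel_adj _ a b).symm

/-- The generalized Petersen graph `P(m,k)`; the vertex `(0, i)` is the outer vertex
`u_i` and `(1, i)` is the inner vertex `w_i` (0-indexed). -/
def petersen (m k : ℕ) : SimpleGraph (Fin 2 × Fin m) :=
  SimpleGraph.fromRel (fun a b =>
    (a.1 = 0 ∧ b.1 = 0 ∧ ((a.2 : ℕ) + 1) % m = (b.2 : ℕ)) ∨
    (a.1 = 0 ∧ b.1 = 1 ∧ a.2 = b.2) ∨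
    (a.1 = 1 ∧ b.1 = 1 ∧ ((a.2 : ℕ) + k) % m = (b.2 : ℕ)))

instance (m k : ℕ) : DecidableRel (petersen m k).Adj := fun a b =>
  decidable_of_iff _ (SimpleGraph.fromRel_adj _ a b).symm

/-- The position on `P(m,k)` where every outer vertex has weight 1 and every inner
vertex has weight 0. -/
def P01 (m : ℕ) : Fin 2 × Fin m → Bool := fun p => decide (p.1 = 0)

/-- The position on `P(m,k)` where every inner vertex has weight 1 and every outer
vertex has weight 0. -/
def P10 (m : ℕ) : Fin 2 × Fin m → Bool := fun p => decide (p.1 = 1)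

/-- The position where every vertex has weight 1. -/
def P11 (m : ℕ) : Fin 2 × Fin m → Bool := fun _ => true

/-- The Toggle position `H_m` on `L_{2,m}` (columns 0-indexed): for `m ≠ 3`, weight 0
exactly at `(0,0), (0,m-1), (1,0), (1,1), (1,m-2), (1,m-1)`; for `m = 3`, weight 0
exactly at `(0,0), (0,2), (1,0), (1,2)`. -/
def Hpos (m : ℕ) : Fin 2 × Fin m → Bool := fun p =>
  if m = 3 then !(decide ((p.2 : ℕ) = 0 ∨ (p.2 : ℕ) = 2))
  else !(decide ((p.1 = 0 ∧ ((p.2 : ℕ) = 0 ∨ (p.2 : ℕ) = m - 1)) ∨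
                 (p.1 = 1 ∧ ((p.2 : ℕ) ≤ 1 ∨ m - 2 ≤ (p.2 : ℕ)))))

/-- The Toggle position `D_m` on `L_{2,m}` (columns 0-indexed): weight 0 exactly at
`(0,0), (0,m-2), (0,m-1), (1,0), (1,1), (1,m-1)`. -/
def Dpos (m : ℕ) : Fin 2 × Fin m → Bool := fun p =>
  !(decide ((p.1 = 0 ∧ ((p.2 : ℕ) = 0 ∨ m - 2 ≤ (p.2 : ℕ))) ∨
            (p.1 = 1 ∧ ((p.2 : ℕ) ≤ 1 ∨ (p.2 : ℕ) = m - 1))))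

/-- The Nimber of the position `H_m`. -/
noncomputable def GH (m : ℕ) : ℕ := grundy (gridGraph m) (Hpos m)

/-- The Nimber of the position `D_m`. -/
noncomputable def GD (m : ℕ) : ℕ := grundy (gridGraph m) (Dpos m)

/-- The cycle graph `C_m` on `Fin m`. -/
def cycleGraph (m : ℕ) : SimpleGraph (Fin m) :=
  SimpleGraph.fromRel (fun a b => ((a : ℕ) + 1) % m = (b : ℕ))

open scoped Classical in
/-- The Nimber of a position of Jacob's Ladder on `C_m`: a position is the `Finset` of
not-yet-removed vertices, and a move at a remaining vertex `v` removes all remaining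
vertices at distance at most 2 from `v` in `C_m`. -/
noncomputable def jlGrundy (m : ℕ) (S : Finset (Fin m)) : ℕ :=
  mex (S.attach.image (fun v =>
    jlGrundy m (S.filter (fun u => 2 < (cycleGraph m).dist v.1 u))))
termination_by S.card
decreasing_by
  apply Finset.card_lt_card
  rw [Finset.ssubset_iff_of_subset (Finset.filter_subset _ _)]
  exact ⟨v.1, v.2, by simp [SimpleGraph.dist_self]⟩

end Toggle


namespace Toggle

/-- `x % m` for `x < 2m`. -/
lemma mod2m {x m : ℕ} (hm : 0 < m) (h : x < 2*m) : x % m = if x < m then x else x - m := by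
  split_ifs with h'
  · exact Nat.mod_eq_of_lt h'
  · rw [Nat.mod_eq_sub_mod (le_of_not_gt h'), Nat.mod_eq_of_lt (by omega)]

/-- cyclic distance of `a b` in `C_m` is at least `r`. -/
def Far (m r a b : ℕ) : Prop := r ≤ (a - b) + (b - a) ∧ r ≤ m - ((a - b) + (b - a))

instance (m r a b : ℕ) : Decidable (Far m r a b) := by unfold Far; infer_instance

lemma Far.symm {m r a b : ℕ} (h : Far m r a b) : Far m r b a := by unfold Far at *; omega

lemma far_comm {m r a b : ℕ} : Far m r a b ↔ Far m r b a := ⟨Far.symm, Far.symm⟩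

variable {m : ℕ} [NeZero m]

lemma val_one_of (hm : 3 ≤ m) : ((1 : Fin m) : ℕ) = 1 := by
  rw [Fin.val_one']; exact Nat.mod_eq_of_lt (by omega)

lemma val_add_one (hm : 3 ≤ m) (i : Fin m) : ((i + 1 : Fin m) : ℕ) = ((i : ℕ) + 1) % m := by
  rw [Fin.val_add, val_one_of hm]

lemma val_sub_one (hm : 3 ≤ m) (i : Fin m) : ((i - 1 : Fin m) : ℕ) = ((i : ℕ) + (m - 1)) % m := by
  rw [Fin.sub_def]
  simp only [val_one_of hm]
  rw [Nat.add_comm]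


lemma cycle_adj {m : ℕ} (i j : Fin m) :
    (cycleGraph m).Adj i j ↔ i ≠ j ∧ (((i:ℕ)+1) % m = (j:ℕ) ∨ ((j:ℕ)+1) % m = (i:ℕ)) := by
  rw [cycleGraph, SimpleGraph.fromRel_adj]

variable {m : ℕ} [NeZero m]

lemma val_add_one_one (hm : 3 ≤ m) (i : Fin m) :
    ((i + 1 + 1 : Fin m) : ℕ) = ((i : ℕ) + 2) % m := by
  rw [val_add_one hm, val_add_one hm, Nat.mod_add_mod]

lemma adj_succ (hm : 3 ≤ m) (i : Fin m) : (cycleGraph m).Adj i (i + 1) := by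
  rw [cycle_adj]
  constructor
  · intro h
    have hv := congrArg Fin.val h
    rw [val_add_one hm, mod2m (by omega) (by omega)] at hv
    have := i.isLt
    split_ifs at hv <;> omega
  · left; rw [val_add_one hm]

open Fin.NatCast in
lemma cycle_reach (hm : 3 ≤ m) (i j : Fin m) : (cycleGraph m).Reachable i j := by
  have key : ∀ k : ℕ, (cycleGraph m).Reachable i (i + (k : Fin m)) := by
    intro k
    induction k with
    | zero =>
      simp only [Nat.cast_zero, add_zero]
      exact SimpleGraph.Reachable.refl i
    | succ k ih =>
      refine ih.trans ?_
      have : (i + ((k+1 : ℕ) : Fin m)) = (i + (k : Fin m)) + 1 := by push_cast; abel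
      rw [this]
      exact (adj_succ hm _).reachable
  have := key (j - i).val
  rwa [Fin.cast_val_eq_self, add_sub_cancel] at this

lemma adj_notFar (hm : 3 ≤ m) {i j : Fin m} (h : (cycleGraph m).Adj i j) :
    ¬ Far m 2 (i:ℕ) (j:ℕ) := by
  rw [cycle_adj] at h
  obtain ⟨-, h | h⟩ := h <;>
  · rw [mod2m (by omega) (by omega)] at h
    have := i.isLt; have := j.isLt
    unfold Far
    split_ifs at h <;> omega

lemma dist_gt_two_iff (hm : 3 ≤ m) (i j : Fin m) :
    2 < (cycleGraph m).dist i j ↔ Far m 3 (i:ℕ) (j:ℕ) := by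
  have hi := i.isLt; have hj := j.isLt
  constructor
  · intro h
    by_contra hf
    apply Nat.lt_irrefl 2
    apply lt_of_lt_of_le h
    have hcases : j = i ∨ j = i + 1 ∨ i = j + 1 ∨ j = i + 1 + 1 ∨ i = j + 1 + 1 := by
      have A1 : ((i:ℕ)+1)%m = if (i:ℕ)+1 < m then (i:ℕ)+1 else (i:ℕ)+1-m := mod2m (by omega) (by omega)
      have A2 : ((i:ℕ)+2)%m = if (i:ℕ)+2 < m then (i:ℕ)+2 else (i:ℕ)+2-m := mod2m (by omega) (by omega)
      have B1 : ((j:ℕ)+1)%m = if (j:ℕ)+1 < m then (j:ℕ)+1 else (j:ℕ)+1-m := mod2m (by omega) (by omega)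
      have B2 : ((j:ℕ)+2)%m = if (j:ℕ)+2 < m then (j:ℕ)+2 else (j:ℕ)+2-m := mod2m (by omega) (by omega)
      unfold Far at hf
      simp only [Fin.ext_iff, val_add_one_one hm, val_add_one hm, A1, A2, B1, B2]
      split_ifs <;> omega
    rcases hcases with rfl | rfl | rfl | rfl | rfl
    · simp [SimpleGraph.dist_self]
    · calc (cycleGraph m).dist i (i+1) ≤ 1 := SimpleGraph.dist_le ((adj_succ hm i).toWalk)
        _ ≤ 2 := by omega
    · rw [SimpleGraph.dist_comm]
      calc (cycleGraph m).dist j (j+1) ≤ 1 := SimpleGraph.dist_le ((adj_succ hm j).toWalk)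
        _ ≤ 2 := by omega
    · exact SimpleGraph.dist_le ((adj_succ hm i).toWalk.append (adj_succ hm (i+1)).toWalk)
    · rw [SimpleGraph.dist_comm]
      exact SimpleGraph.dist_le ((adj_succ hm j).toWalk.append (adj_succ hm (j+1)).toWalk)
  · intro hf
    by_contra h
    push_neg at h
    obtain ⟨w, hw⟩ := (cycle_reach hm i j).exists_walk_length_eq_dist
    rw [← hw] at h
    clear hw
    cases w with
    | nil => unfold Far at hf; omega
    | cons hadj w' =>
      cases w' with
      | nil =>
        have := adj_notFar hm hadj
        unfold Far at *; omega
      | cons hadj2 w'' =>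
        cases w'' with
        | nil =>
          have h1 := adj_notFar hm hadj
          have h2 := adj_notFar hm hadj2
          unfold Far at *; omega
        | cons h3 w3 =>
          rw [SimpleGraph.Walk.length_cons, SimpleGraph.Walk.length_cons,
            SimpleGraph.Walk.length_cons] at h
          omega

variable {m : ℕ} [NeZero m]

lemma mem_closedNbhd' {V : Type*} [Fintype V] [DecidableEq V] (G : SimpleGraph V)
    [DecidableRel G.Adj] (v u : V) : u ∈ closedNbhd G v ↔ u = v ∨ G.Adj v u := by
  simp [closedNbhd]

lemma petersen_adj (hm : 3 ≤ m) (c d : Fin 2) (i j : Fin m) :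
    (petersen m 1).Adj (c, i) (d, j) ↔
      (c = d ∧ i ≠ j ∧ (((i:ℕ)+1)%m = (j:ℕ) ∨ ((j:ℕ)+1)%m = (i:ℕ))) ∨ (c ≠ d ∧ i = j) := by
  rw [petersen, SimpleGraph.fromRel_adj]
  have hi := i.isLt; have hj := j.isLt
  rw [mod2m (m := m) (by omega) (by omega), mod2m (m := m) (by omega) (by omega)]
  constructor
  · rintro ⟨hne, h⟩
    fin_cases c <;> fin_cases d <;>
      simp_all [Prod.ext_iff, Fin.ext_iff] <;> omega
  · rintro (⟨rfl, hij, h⟩ | ⟨hcd, rfl⟩)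
    · refine ⟨by simp [Prod.ext_iff, hij], ?_⟩
      rw [Ne, Fin.ext_iff] at hij
      fin_cases c <;> simp_all <;> omega
    · refine ⟨by simp [Prod.ext_iff, hcd], ?_⟩
      fin_cases c <;> fin_cases d <;> simp_all

lemma ne_add_one (hm : 3 ≤ m) (i : Fin m) : i ≠ i + 1 := by
  rw [Ne, Fin.ext_iff, val_add_one hm, mod2m (by omega) (by have := i.isLt; omega)]
  have := i.isLt; split_ifs <;> omega

lemma ne_sub_one (hm : 3 ≤ m) (i : Fin m) : i ≠ i - 1 := by
  rw [Ne, Fin.ext_iff, val_sub_one hm, mod2m (by omega) (by have := i.isLt; omega)]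
  have := i.isLt; split_ifs <;> omega

lemma add_ne_sub_one (hm : 3 ≤ m) (i : Fin m) : i + 1 ≠ i - 1 := by
  rw [Ne, Fin.ext_iff, val_add_one hm, val_sub_one hm,
    mod2m (by omega) (by have := i.isLt; omega), mod2m (by omega) (by have := i.isLt; omega)]
  have := i.isLt; split_ifs <;> omega

lemma petersen_closedNbhd (hm : 3 ≤ m) (c : Fin 2) (i : Fin m) :
    closedNbhd (petersen m 1) (c, i) =
      {(c, i), (c, i + 1), (c, i - 1), (1 - c, i)} := by
  have hi := i.isLt
  ext ⟨d, j⟩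
  rw [mem_closedNbhd', petersen_adj hm]
  simp only [Finset.mem_insert, Finset.mem_singleton, Prod.ext_iff]
  constructor
  · rintro (⟨h1, h2⟩ | ⟨rfl, hij, h | h⟩ | ⟨hcd, rfl⟩)
    · exact Or.inl ⟨h1, h2⟩
    · refine Or.inr (Or.inl ⟨rfl, ?_⟩)
      rw [Fin.ext_iff, val_add_one hm]; omega
    · refine Or.inr (Or.inr (Or.inl ⟨rfl, ?_⟩))
      rw [Fin.ext_iff, val_sub_one hm, mod2m (by omega) (by omega)]
      rw [mod2m (by omega) (by have := j.isLt; omega)] at h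
      have := j.isLt
      rw [Ne, Fin.ext_iff] at hij
      split_ifs at h ⊢ <;> omega
    · refine Or.inr (Or.inr (Or.inr ⟨?_, rfl⟩))
      fin_cases c <;> fin_cases d <;> simp_all
  · rintro (⟨rfl, rfl⟩ | ⟨rfl, rfl⟩ | ⟨rfl, rfl⟩ | ⟨rfl, rfl⟩)
    · exact Or.inl ⟨rfl, rfl⟩
    · exact Or.inr (Or.inl ⟨rfl, (ne_add_one hm i), Or.inl (val_add_one hm i).symm⟩)
    · refine Or.inr (Or.inl ⟨rfl, (ne_sub_one hm i), Or.inr ?_⟩)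
      rw [val_sub_one hm, Nat.mod_add_mod]
      have : (i:ℕ) + (m-1) + 1 = (i:ℕ) + m := by omega
      rw [this, Nat.add_mod_right, Nat.mod_eq_of_lt hi]
    · refine Or.inr (Or.inr ⟨?_, rfl⟩)
      fin_cases c <;> simp

lemma card_filter_four {α : Type*} [DecidableEq α] (p : α → Bool) {a b c d : α}
    (hab : a ≠ b) (hac : a ≠ c) (had : a ≠ d) (hbc : b ≠ c) (hbd : b ≠ d) (hcd : c ≠ d) :
    (({a, b, c, d} : Finset α).filter (fun x => p x = true)).card =
      (if p a then 1 else 0) + (if p b then 1 else 0) + (if p c then 1 else 0)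
        + (if p d then 1 else 0) := by
  rw [Finset.filter_insert, Finset.filter_insert, Finset.filter_insert, Finset.filter_singleton]
  by_cases pa : p a <;> by_cases pb : p b <;> by_cases pc : p c <;> by_cases pd : p d <;>
    simp [pa, pb, pc, pd, Finset.card_insert_of_notMem, Finset.mem_insert,
      hab, hac, had, hbc, hbd, hcd]

lemma card_four {α : Type*} [DecidableEq α] {a b c d : α}
    (hab : a ≠ b) (hac : a ≠ c) (had : a ≠ d) (hbc : b ≠ c) (hbd : b ≠ d) (hcd : c ≠ d) :
    ({a, b, c, d} : Finset α).card = 4 := by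
  rw [Finset.card_insert_of_notMem (by simp [hab, hac, had]),
    Finset.card_insert_of_notMem (by simp [hbc, hbd]),
    Finset.card_insert_of_notMem (by simp [hcd]), Finset.card_singleton]

lemma nbhdWeight_move {V : Type*} [Fintype V] [DecidableEq V] (G : SimpleGraph V)
    [DecidableRel G.Adj] (ω : V → Bool) (v : V) :
    nbhdWeight G (move G ω v) v = (closedNbhd G v).card - nbhdWeight G ω v := by
  unfold nbhdWeight
  have h1 : (closedNbhd G v).filter (fun u => move G ω v u = true)
      = (closedNbhd G v).filter (fun u => ¬ (ω u = true)) := by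
    apply Finset.filter_congr
    intro u hu
    simp [move, hu]
  rw [h1, Finset.filter_not, Finset.card_sdiff_of_subset (Finset.filter_subset _ _)]

/-- distinctness of neighborhood elements -/
lemma pet_distinct (hm : 3 ≤ m) (c : Fin 2) (i : Fin m) :
    ((c,i) ≠ (c,i+1) ∧ (c,i) ≠ (c,i-1) ∧ (c,i) ≠ ((1-c : Fin 2),i)) ∧
    (c,i+1) ≠ (c,i-1) ∧ (c,i+1) ≠ ((1-c : Fin 2),i) ∧ (c,i-1) ≠ ((1-c : Fin 2),i) := by
  have h0 : c ≠ 1 - c := by fin_cases c <;> decide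
  refine ⟨⟨?_, ?_, ?_⟩, ?_, ?_, ?_⟩ <;>
    simp [Prod.ext_iff, ne_add_one hm i, ne_sub_one hm i, add_ne_sub_one hm i, h0]

lemma pet_card_nbhd (hm : 3 ≤ m) (c : Fin 2) (i : Fin m) :
    (closedNbhd (petersen m 1) (c, i)).card = 4 := by
  obtain ⟨⟨h1, h2, h3⟩, h4, h5, h6⟩ := pet_distinct hm c i
  rw [petersen_closedNbhd hm, card_four h1 h2 h3 h4 h5 h6]

lemma pet_nbhdWeight (hm : 3 ≤ m) (ω : Fin 2 × Fin m → Bool) (c : Fin 2) (i : Fin m) :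
    nbhdWeight (petersen m 1) ω (c, i) =
      (if ω (c,i) then 1 else 0) + (if ω (c,i+1) then 1 else 0)
        + (if ω (c,i-1) then 1 else 0) + (if ω ((1-c : Fin 2),i) then 1 else 0) := by
  obtain ⟨⟨h1, h2, h3⟩, h4, h5, h6⟩ := pet_distinct hm c i
  rw [nbhdWeight, petersen_closedNbhd hm, card_filter_four ω h1 h2 h3 h4 h5 h6]

lemma pet_isLegal (hm : 3 ≤ m) (ω : Fin 2 × Fin m → Bool) (c : Fin 2) (i : Fin m) :
    IsLegal (petersen m 1) ω (c, i) ↔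
      ω (c,i) = true ∧ 3 ≤ nbhdWeight (petersen m 1) ω (c, i) := by
  rw [IsLegal, nbhdWeight_move, pet_card_nbhd hm]
  have hle : nbhdWeight (petersen m 1) ω (c, i) ≤ 4 := by
    rw [← pet_card_nbhd hm c i]
    exact Finset.card_le_card (Finset.filter_subset _ _)
  constructor <;> rintro ⟨h, hk⟩ <;> exact ⟨h, by omega⟩

/-! ### Arithmetic facts about `Far` -/

lemma not_far_self (m r a : ℕ) : ¬ Far m (r+1) a a := by unfold Far; omega

lemma far_mono {m r r' a b : ℕ} (h : r ≤ r') (hf : Far m r' a b) : Far m r a b := by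
  unfold Far at *; omega

lemma far_step_add (hm : 3 ≤ m) {a b : ℕ} (ha : a < m) (hb : b < m)
    (h : Far m 3 a b) : Far m 2 a ((b+1) % m) := by
  rw [mod2m (by omega) (by omega)]
  unfold Far at *; split_ifs <;> omega

lemma far_step_sub (hm : 3 ≤ m) {a b : ℕ} (ha : a < m) (hb : b < m)
    (h : Far m 3 a b) : Far m 2 a ((b+(m-1)) % m) := by
  rw [mod2m (by omega) (by omega)]
  unfold Far at *; split_ifs <;> omega

lemma far_iff3 (hm : 3 ≤ m) {a b : ℕ} (ha : a < m) (hb : b < m) :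
    Far m 3 a b ↔ Far m 2 a b ∧ Far m 2 a ((b+1) % m) ∧ Far m 2 a ((b+(m-1)) % m) := by
  rw [mod2m (by omega) (by omega), mod2m (by omega) (by omega)]
  unfold Far; split_ifs <;> omega

lemma far_of_ne (hm : 3 ≤ m) {a b : ℕ} (ha : a < m) (hb : b < m)
    (h1 : a ≠ b) (h2 : b ≠ (a+1) % m) (h3 : b ≠ (a+(m-1)) % m) : Far m 2 a b := by
  rw [mod2m (by omega) (by omega)] at h2
  rw [mod2m (by omega) (by omega)] at h3
  unfold Far; split_ifs at h2 h3 <;> omega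

lemma not_far3_succ (hm : 3 ≤ m) {a : ℕ} (ha : a < m) : ¬ Far m 3 a ((a+1) % m) := by
  rw [mod2m (by omega) (by omega)]
  unfold Far; split_ifs <;> omega

lemma not_far3_pred (hm : 3 ≤ m) {a : ℕ} (ha : a < m) : ¬ Far m 3 a ((a+(m-1)) % m) := by
  rw [mod2m (by omega) (by omega)]
  unfold Far; split_ifs <;> omega

lemma not_far2_succ (hm : 3 ≤ m) {a : ℕ} (ha : a < m) : ¬ Far m 2 a ((a+1) % m) := by
  rw [mod2m (by omega) (by omega)]
  unfold Far; split_ifs <;> omega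

lemma not_far2_pred (hm : 3 ≤ m) {a : ℕ} (ha : a < m) : ¬ Far m 2 a ((a+(m-1)) % m) := by
  rw [mod2m (by omega) (by omega)]
  unfold Far; split_ifs <;> omega

/-! ### The correspondence positions -/

/-- The remaining Jacob's Ladder vertices after playing the set `P`. -/
def psS (P : Finset (Fin m)) : Finset (Fin m) :=
  Finset.univ.filter (fun j => ∀ p ∈ P, Far m 3 (p:ℕ) (j:ℕ))

/-- The Toggle position on `P(m,1)` after playing the outer vertices in `P`. -/
def psW (P : Finset (Fin m)) : Fin 2 × Fin m → Bool := fun q =>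
  if q.1 = 0 then decide (∀ p ∈ P, Far m 2 (p:ℕ) (q.2:ℕ)) else decide (q.2 ∈ P)

/-- A set of plays is valid if pairwise cyclically at distance ≥ 3. -/
def ValidP (P : Finset (Fin m)) : Prop :=
  ∀ p ∈ P, ∀ q ∈ P, p ≠ q → Far m 3 (p:ℕ) (q:ℕ)

lemma mem_psS {P : Finset (Fin m)} {j : Fin m} :
    j ∈ psS P ↔ ∀ p ∈ P, Far m 3 (p:ℕ) (j:ℕ) := by simp [psS]

lemma psW_outer (P : Finset (Fin m)) (j : Fin m) :
    psW P (0, j) = decide (∀ p ∈ P, Far m 2 (p:ℕ) (j:ℕ)) := by simp [psW]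

lemma psW_inner (P : Finset (Fin m)) (j : Fin m) :
    psW P (1, j) = decide (j ∈ P) := by simp [psW]

lemma legal_iff (hm : 3 ≤ m) {P : Finset (Fin m)} (hP : ValidP P) (c : Fin 2) (j : Fin m) :
    IsLegal (petersen m 1) (psW P) (c, j) ↔ c = 0 ∧ j ∈ psS P := by
  have hj := j.isLt
  have e0 : (1 - 0 : Fin 2) = 1 := by decide
  have e1 : (1 - 1 : Fin 2) = 0 := by decide
  rw [pet_isLegal hm, pet_nbhdWeight hm]
  fin_cases c
  · -- outer vertex
    simp only [Fin.zero_eta, e0, psW_outer, psW_inner, decide_eq_true_eq]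
    constructor
    · rintro ⟨hA, hk⟩
      refine ⟨trivial, mem_psS.2 fun p hp => ?_⟩
      have hC : ¬ (j ∈ P) := fun h => not_far_self m 1 (j:ℕ) (hA j h)
      have hB : (∀ p ∈ P, Far m 2 (p:ℕ) ((j+1 : Fin m):ℕ)) ∧
          (∀ p ∈ P, Far m 2 (p:ℕ) ((j-1 : Fin m):ℕ)) := by
        by_cases hBp : ∀ p ∈ P, Far m 2 (p:ℕ) ((j+1 : Fin m):ℕ) <;>
          by_cases hBm : ∀ p ∈ P, Far m 2 (p:ℕ) ((j-1 : Fin m):ℕ)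
        · exact ⟨hBp, hBm⟩
        · rw [if_pos hA, if_pos hBp, if_neg hBm, if_neg hC] at hk; omega
        · rw [if_pos hA, if_neg hBp, if_pos hBm, if_neg hC] at hk; omega
        · rw [if_pos hA, if_neg hBp, if_neg hBm, if_neg hC] at hk; omega
      rw [far_iff3 hm (p.isLt) hj]
      refine ⟨hA p hp, ?_, ?_⟩
      · have := hB.1 p hp; rwa [val_add_one hm] at this
      · have := hB.2 p hp; rwa [val_sub_one hm] at this
    · rintro ⟨-, hS⟩
      rw [mem_psS] at hS
      have hA : ∀ p ∈ P, Far m 2 (p:ℕ) (j:ℕ) := fun p hp => far_mono (by omega) (hS p hp)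
      have hBp : ∀ p ∈ P, Far m 2 (p:ℕ) ((j+1 : Fin m):ℕ) := fun p hp => by
        rw [val_add_one hm]; exact far_step_add hm p.isLt hj (hS p hp)
      have hBm : ∀ p ∈ P, Far m 2 (p:ℕ) ((j-1 : Fin m):ℕ) := fun p hp => by
        rw [val_sub_one hm]; exact far_step_sub hm p.isLt hj (hS p hp)
      have hC : ¬ (j ∈ P) := fun h => not_far_self m 2 (j:ℕ) (hS j h)
      refine ⟨hA, ?_⟩
      rw [if_pos hA, if_pos hBp, if_pos hBm, if_neg hC]
  · -- inner vertex: never legal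
    simp only [Fin.mk_one, e1, psW_outer, psW_inner, decide_eq_true_eq]
    constructor
    · rintro ⟨hC, hk⟩
      exfalso
      have hA : ¬ ∀ p ∈ P, Far m 2 (p:ℕ) (j:ℕ) :=
        fun h => not_far_self m 1 (j:ℕ) (h j hC)
      have hBp : ¬ ((j + 1 : Fin m) ∈ P) := by
        intro h
        have := hP j hC (j+1) h (ne_add_one hm j)
        rw [val_add_one hm] at this
        exact not_far3_succ hm hj this
      have hBm : ¬ ((j - 1 : Fin m) ∈ P) := by
        intro h
        have := hP j hC (j-1) h (ne_sub_one hm j)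
        rw [val_sub_one hm] at this
        exact not_far3_pred hm hj this
      rw [if_pos hC, if_neg hBp, if_neg hBm, if_neg hA] at hk
      omega
    · rintro ⟨h, -⟩
      exact absurd h (by decide)

lemma not_mem_of_psS (hm : 3 ≤ m) {P : Finset (Fin m)} {i : Fin m} (hi : i ∈ psS P) :
    i ∉ P := fun h => not_far_self m 2 (i:ℕ) (mem_psS.1 hi i h)

lemma move_psW (hm : 3 ≤ m) {P : Finset (Fin m)} {i : Fin m}
    (hi : i ∈ psS P) :
    move (petersen m 1) (psW P) (0, i) = psW (insert i P) := by
  have hiS := mem_psS.1 hi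
  have hiP := not_mem_of_psS hm hi
  have e0 : (1 - 0 : Fin 2) = 1 := by decide
  funext x
  rw [move, petersen_closedNbhd hm]
  split_ifs with h
  · simp only [Finset.mem_insert, Finset.mem_singleton] at h
    rcases h with rfl | rfl | rfl | rfl
    · rw [psW_outer, psW_outer]
      have hA : ∀ p ∈ P, Far m 2 (p:ℕ) (i:ℕ) := fun p hp => far_mono (by omega) (hiS p hp)
      have hA' : ¬ ∀ p ∈ insert i P, Far m 2 (p:ℕ) (i:ℕ) :=
        fun h => not_far_self m 1 (i:ℕ) (h i (Finset.mem_insert_self i P))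
      simp [hA, hA']
      exact ⟨by simpa using not_far_self m 1 (i:ℕ), hA⟩
    · rw [psW_outer, psW_outer]
      have hA : ∀ p ∈ P, Far m 2 (p:ℕ) ((i+1 : Fin m):ℕ) := fun p hp => by
        rw [val_add_one hm]; exact far_step_add hm p.isLt i.isLt (hiS p hp)
      have hA' : ¬ ∀ p ∈ insert i P, Far m 2 (p:ℕ) ((i+1 : Fin m):ℕ) := by
        intro h
        have := h i (Finset.mem_insert_self i P)
        rw [val_add_one hm] at this
        exact not_far2_succ hm i.isLt this
      simp [hA, hA']
      exact ⟨by rw [val_add_one hm]; exact not_far2_succ hm i.isLt, hA⟩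
    · rw [psW_outer, psW_outer]
      have hA : ∀ p ∈ P, Far m 2 (p:ℕ) ((i-1 : Fin m):ℕ) := fun p hp => by
        rw [val_sub_one hm]; exact far_step_sub hm p.isLt i.isLt (hiS p hp)
      have hA' : ¬ ∀ p ∈ insert i P, Far m 2 (p:ℕ) ((i-1 : Fin m):ℕ) := by
        intro h
        have := h i (Finset.mem_insert_self i P)
        rw [val_sub_one hm] at this
        exact not_far2_pred hm i.isLt this
      simp [hA, hA']
      exact ⟨by rw [val_sub_one hm]; exact not_far2_pred hm i.isLt, hA⟩
    · rw [e0, psW_inner, psW_inner]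
      simp [hiP]
  · obtain ⟨d, j⟩ := x
    simp only [Finset.mem_insert, Finset.mem_singleton, not_or] at h
    obtain ⟨h1, h2, h3, h4⟩ := h
    rw [e0] at h4
    by_cases hd : d = 0
    · subst hd
      rw [psW_outer, psW_outer]
      have hij : j ≠ i := fun hh => h1 (by rw [hh])
      have hij1 : j ≠ i + 1 := fun hh => h2 (by rw [hh])
      have hij2 : j ≠ i - 1 := fun hh => h3 (by rw [hh])
      have hfar : Far m 2 (i:ℕ) (j:ℕ) := by
        apply far_of_ne hm i.isLt j.isLt
        · exact fun hh => hij (Fin.ext hh.symm)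
        · rw [← val_add_one hm]; exact fun hh => hij1 (Fin.ext hh)
        · rw [← val_sub_one hm]; exact fun hh => hij2 (Fin.ext hh)
      simp only [decide_eq_decide, Finset.forall_mem_insert]
      tauto
    · have hd1 : d = 1 := by omega
      subst hd1
      rw [psW_inner, psW_inner]
      have hij : j ≠ i := fun hh => h4 (by rw [hh])
      simp [Finset.mem_insert, hij]

open scoped Classical in
lemma psS_insert (hm : 3 ≤ m) (P : Finset (Fin m)) (i : Fin m) :
    (psS P).filter (fun u => 2 < (cycleGraph m).dist i u) = psS (insert i P) := by
  ext j
  simp only [Finset.mem_filter, mem_psS, dist_gt_two_iff hm, Finset.forall_mem_insert]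
  tauto

lemma validP_insert (hm : 3 ≤ m) {P : Finset (Fin m)} {i : Fin m}
    (hP : ValidP P) (hi : i ∈ psS P) : ValidP (insert i P) := by
  have hiS := mem_psS.1 hi
  intro p hp q hq hpq
  rw [Finset.mem_insert] at hp hq
  rcases hp with rfl | hp <;> rcases hq with rfl | hq
  · exact absurd rfl hpq
  · exact (hiS q hq).symm
  · exact hiS p hp
  · exact hP p hp q hq hpq

lemma psS_insert_card {P : Finset (Fin m)} {i : Fin m} (hi : i ∈ psS P) :
    (psS (insert i P)).card < (psS P).card := by
  apply Finset.card_lt_card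
  constructor
  · intro j hj
    rw [mem_psS] at hj ⊢
    exact fun p hp => hj p (Finset.mem_insert_of_mem hp)
  · intro hsub
    have := mem_psS.1 (hsub hi) i (Finset.mem_insert_self i P)
    exact not_far_self m 2 (i:ℕ) this

lemma psS_empty : psS (∅ : Finset (Fin m)) = Finset.univ := by simp [psS]

lemma psW_empty : psW (∅ : Finset (Fin m)) = P01 m := by
  funext x
  obtain ⟨d, j⟩ := x
  by_cases hd : d = 0 <;> [subst hd; skip]
  · rw [psW_outer]; simp [P01]
  · have hd1 : d = 1 := by omega
    subst hd1
    rw [psW_inner]; simp [P01]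

lemma main_corr (hm : 3 ≤ m) (n : ℕ) : ∀ (P : Finset (Fin m)), ValidP P → (psS P).card ≤ n →
    jlGrundy m (psS P) = grundy (petersen m 1) (psW P) := by
  induction n using Nat.strong_induction_on with
  | _ n IH =>
    intro P hP hc
    rw [jlGrundy.eq_def, grundy.eq_def]
    congr 1
    ext x
    simp only [Finset.mem_image, Finset.mem_attach, true_and, Subtype.exists]
    constructor
    · rintro ⟨i, hi, rfl⟩
      refine ⟨(0, i), Finset.mem_filter.2 ⟨Finset.mem_univ _, (legal_iff hm hP 0 i).2 ⟨rfl, hi⟩⟩, ?_⟩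
      rw [move_psW hm hi, psS_insert hm P i,
        ← IH ((psS (insert i P)).card) (lt_of_lt_of_le (psS_insert_card hi) hc)
          (insert i P) (validP_insert hm hP hi) le_rfl]
    · rintro ⟨⟨c, i⟩, hv, rfl⟩
      have := (legal_iff hm hP c i).1 (Finset.mem_filter.1 hv).2
      obtain ⟨rfl, hi⟩ := this
      refine ⟨i, hi, ?_⟩
      rw [move_psW hm hi, psS_insert hm P i,
        ← IH ((psS (insert i P)).card) (lt_of_lt_of_le (psS_insert_card hi) hc)
          (insert i P) (validP_insert hm hP hi) le_rfl]

lemma part1 (hm : 3 ≤ m) :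
    jlGrundy m Finset.univ = grundy (petersen m 1) (P01 m) := by
  have h0 : (Finset.univ : Finset (Fin m)) = psS (∅ : Finset (Fin m)) := psS_empty.symm
  rw [h0, main_corr hm _ ∅ (by intro p hp; simp at hp) le_rfl, psW_empty]

section Equiv
variable {V : Type*} [Fintype V] [DecidableEq V] (G : SimpleGraph V) [DecidableRel G.Adj]
  (e : V ≃ V)

lemma mem_closedNbhd_equiv (he : ∀ a b, G.Adj (e a) (e b) ↔ G.Adj a b) (v u : V) :
    u ∈ closedNbhd G v ↔ e u ∈ closedNbhd G (e v) := by
  rw [mem_closedNbhd', mem_closedNbhd', he, e.apply_eq_iff_eq]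

lemma nbhdWeight_equiv (he : ∀ a b, G.Adj (e a) (e b) ↔ G.Adj a b) (ω : V → Bool) (v : V) :
    nbhdWeight G (fun u => ω (e u)) v = nbhdWeight G ω (e v) := by
  unfold nbhdWeight
  apply Finset.card_bij' (fun u _ => e u) (fun u _ => e.symm u)
  · intro a ha
    rw [Finset.mem_filter] at ha ⊢
    exact ⟨(mem_closedNbhd_equiv G e he v a).1 ha.1, ha.2⟩
  · intro a ha
    rw [Finset.mem_filter] at ha ⊢
    constructor
    · rw [mem_closedNbhd_equiv G e he v (e.symm a), e.apply_symm_apply]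
      exact ha.1
    · simp only [e.apply_symm_apply]; exact ha.2
  · intro a _; exact e.symm_apply_apply a
  · intro a _; exact e.apply_symm_apply a

lemma weight_equiv (ω : V → Bool) : weight (fun u => ω (e u)) = weight ω := by
  unfold weight
  apply Finset.card_bij' (fun u _ => e u) (fun u _ => e.symm u)
  · intro a ha
    rw [Finset.mem_filter] at ha ⊢
    exact ⟨Finset.mem_univ _, ha.2⟩
  · intro a ha
    rw [Finset.mem_filter] at ha ⊢
    refine ⟨Finset.mem_univ _, ?_⟩
    simp only [e.apply_symm_apply]; exact ha.2
  · intro a _; exact e.symm_apply_apply a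
  · intro a _; exact e.apply_symm_apply a

lemma move_equiv (he : ∀ a b, G.Adj (e a) (e b) ↔ G.Adj a b) (ω : V → Bool) (v : V) :
    move G (fun u => ω (e u)) v = fun u => move G ω (e v) (e u) := by
  funext u
  rw [move, move]
  exact if_congr (mem_closedNbhd_equiv G e he v u) rfl rfl

lemma isLegal_equiv (he : ∀ a b, G.Adj (e a) (e b) ↔ G.Adj a b) (ω : V → Bool) (v : V) :
    IsLegal G (fun u => ω (e u)) v ↔ IsLegal G ω (e v) := by
  unfold IsLegal
  rw [nbhdWeight_equiv G e he, move_equiv G e he, nbhdWeight_equiv G e he]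

lemma grundy_equiv (he : ∀ a b, G.Adj (e a) (e b) ↔ G.Adj a b) (n : ℕ) : ∀ ω : V → Bool, weight ω ≤ n →
    grundy G (fun u => ω (e u)) = grundy G ω := by
  induction n using Nat.strong_induction_on with
  | _ n IH =>
    intro ω hw
    rw [grundy.eq_def, grundy.eq_def]
    congr 1
    ext x
    simp only [Finset.mem_image, Finset.mem_attach, true_and, Subtype.exists]
    constructor
    · rintro ⟨v, hv, rfl⟩
      have hleg : IsLegal G ω (e v) :=
        (isLegal_equiv G e he ω v).1 (Finset.mem_filter.1 hv).2
      refine ⟨e v, Finset.mem_filter.2 ⟨Finset.mem_univ _, hleg⟩, ?_⟩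
      rw [move_equiv G e he,
        IH (weight (move G ω (e v))) (lt_of_lt_of_le (weight_move_lt G hleg) hw)
          (move G ω (e v)) le_rfl]
    · rintro ⟨v, hv, rfl⟩
      have hleg : IsLegal G ω v := (Finset.mem_filter.1 hv).2
      have hleg' : IsLegal G (fun u => ω (e u)) (e.symm v) := by
        rw [isLegal_equiv G e he, e.apply_symm_apply]; exact hleg
      refine ⟨e.symm v, Finset.mem_filter.2 ⟨Finset.mem_univ _, hleg'⟩, ?_⟩
      rw [move_equiv G e he, e.apply_symm_apply,
        IH (weight (move G ω v)) (lt_of_lt_of_le (weight_move_lt G hleg) hw)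
          (move G ω v) le_rfl]

end Equiv

/-- The inner-outer swap on `P(m,1)`. -/
def swapIO : Fin 2 × Fin m ≃ Fin 2 × Fin m where
  toFun p := (1 - p.1, p.2)
  invFun p := (1 - p.1, p.2)
  left_inv p := by obtain ⟨c, i⟩ := p; fin_cases c <;> rfl
  right_inv p := by obtain ⟨c, i⟩ := p; fin_cases c <;> rfl

lemma swapIO_adj (hm : 3 ≤ m) (a b : Fin 2 × Fin m) :
    (petersen m 1).Adj (swapIO a) (swapIO b) ↔ (petersen m 1).Adj a b := by
  obtain ⟨c, i⟩ := a
  obtain ⟨d, j⟩ := b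
  show (petersen m 1).Adj (1 - c, i) (1 - d, j) ↔ _
  rw [petersen_adj hm, petersen_adj hm]
  have hcd : (1 - c = 1 - d ↔ c = d) ∧ (1 - c ≠ 1 - d ↔ c ≠ d) := by
    fin_cases c <;> fin_cases d <;> simp
  rw [hcd.1, hcd.2]

lemma P10_eq (hm : 3 ≤ m) : P10 m = fun u => P01 m (swapIO u) := by
  funext x
  obtain ⟨c, i⟩ := x
  fin_cases c <;> rfl

lemma part2 (hm : 3 ≤ m) :
    grundy (petersen m 1) (P01 m) = grundy (petersen m 1) (P10 m) := by
  rw [P10_eq hm]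
  exact (grundy_equiv (petersen m 1) swapIO (swapIO_adj hm) (weight (P01 m)) (P01 m) le_rfl).symm

end Toggle

/-- for `m ≥ 3`, the Nimber of Jacob's Ladder `JL_m` equals the Nimber
of `P_{0,1}(m,1)`, which equals the Nimber of `P_{1,0}(m,1)`. -/
theorem statement14 (m : ℕ) (hm : 3 ≤ m) :
    Toggle.jlGrundy m Finset.univ
        = Toggle.grundy (Toggle.petersen m 1) (Toggle.P01 m) ∧
    Toggle.grundy (Toggle.petersen m 1) (Toggle.P01 m)
        = Toggle.grundy (Toggle.petersen m 1) (Toggle.P10 m) := by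
  haveI : NeZero m := ⟨by omega⟩
  exact ⟨Toggle.part1 hm, Toggle.part2 hm⟩
end

section
/- For every integer k ≥ 3, the Nimber of the Toggle position P_{0,1}(2k,1) is 0; that is, the Toggle game on the generalized Petersen graph P(2k,1) in which every outer vertex has weight 1 and every inner vertex has weight 0 is a second-player win. -/
namespace Toggle

variable {V : Type*} [Fintype V] [DecidableEq V]

/-! ### Auxiliary lemmas for the symmetry strategy -/

lemma mex_eq_zero {s : Finset ℕ} (h : 0 ∉ s) : mex s = 0 :=
  Nat.sInf_eq_zero.mpr (Or.inl h)

lemma mex_ne_zero {s : Finset ℕ} (h : 0 ∈ s) : mex s ≠ 0 := by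
  intro h0
  rcases Nat.sInf_eq_zero.mp h0 with h1 | h1
  · exact h1 h
  · have hmem : (s.sup id + 1) ∈ {n : ℕ | n ∉ s} := by
      intro hmem
      have := Finset.le_sup (f := id) hmem
      simp only [id_eq] at this
      omega
    rw [h1] at hmem
    exact hmem

lemma self_mem_closedNbhd (G : SimpleGraph V) [DecidableRel G.Adj] (v : V) :
    v ∈ closedNbhd G v := Finset.mem_insert_self v _

lemma nbhdWeight_move_self (G : SimpleGraph V) [DecidableRel G.Adj] (ω : V → Bool) (v : V) :
    nbhdWeight G (move G ω v) v = (closedNbhd G v).card - nbhdWeight G ω v := by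
  unfold nbhdWeight
  have h : (closedNbhd G v).filter (fun u => move G ω v u = true)
      = (closedNbhd G v).filter (fun u => ¬ (ω u = true)) := by
    apply Finset.filter_congr
    intro u hu
    simp only [move, hu, if_true, eq_iff_iff]
    cases ω u <;> simp
  rw [h, Finset.filter_not, Finset.card_sdiff_of_subset (Finset.filter_subset _ _)]

/-- The symmetry strategy: if `σ` is an involutive closed-neighborhood-preserving map
with `N[v]` and `N[σ v]` disjoint, then every `σ`-invariant position has Grundy value 0. -/
lemma symm_grundy_zero (G : SimpleGraph V) [DecidableRel G.Adj] (σ : V → V)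
    (hinv : ∀ u, σ (σ u) = u)
    (hmem : ∀ u v, σ u ∈ closedNbhd G (σ v) ↔ u ∈ closedNbhd G v)
    (hdisj : ∀ v u, u ∈ closedNbhd G v → u ∉ closedNbhd G (σ v)) :
    ∀ n (ω : V → Bool), weight ω < n → (∀ u, ω (σ u) = ω u) → grundy G ω = 0 := by
  have hσinj : Function.Injective σ := Function.LeftInverse.injective hinv
  have himg : ∀ v, (closedNbhd G v).image σ = closedNbhd G (σ v) := by
    intro v
    ext u
    simp only [Finset.mem_image]
    constructor
    · rintro ⟨w, hw, rfl⟩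
      exact (hmem w v).mpr hw
    · intro hu
      refine ⟨σ u, ?_, hinv u⟩
      have h := hmem (σ u) v
      rw [hinv] at h
      exact h.mp hu
  have hmemσ : ∀ u v, σ u ∈ closedNbhd G v ↔ u ∈ closedNbhd G (σ v) := by
    intro u v
    conv_lhs => rw [← hinv v]
    exact hmem u (σ v)
  have hcard : ∀ v, (closedNbhd G (σ v)).card = (closedNbhd G v).card := by
    intro v
    rw [← himg, Finset.card_image_of_injective _ hσinj]
  have hW : ∀ (ψ : V → Bool), (∀ u, ψ (σ u) = ψ u) → ∀ v,
      nbhdWeight G ψ (σ v) = nbhdWeight G ψ v := by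
    intro ψ hψ v
    unfold nbhdWeight
    rw [← himg, Finset.filter_image, Finset.card_image_of_injective _ hσinj]
    congr 1
    apply Finset.filter_congr
    intro u _
    rw [hψ]
  have hnotin : ∀ v, σ v ∉ closedNbhd G v := by
    intro v h
    exact hdisj v (σ v) h (self_mem_closedNbhd G (σ v))
  have hlegal : ∀ (ω : V → Bool), (∀ u, ω (σ u) = ω u) → ∀ v, IsLegal G ω v →
      IsLegal G (move G ω v) (σ v) := by
    intro ω hω v hv
    have hval : move G ω v (σ v) = ω (σ v) := by
      simp [move, hnotin v]
    have hWmove : nbhdWeight G (move G ω v) (σ v) = nbhdWeight G ω (σ v) := by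
      unfold nbhdWeight
      congr 1
      apply Finset.filter_congr
      intro u hu
      have hnv : u ∉ closedNbhd G v := fun h => hdisj v u h hu
      simp [move, hnv]
    constructor
    · rw [hval, hω]
      exact hv.1
    · rw [nbhdWeight_move_self, hWmove, hW ω hω v, hcard]
      have h2 := hv.2
      rw [nbhdWeight_move_self] at h2
      exact h2
  have hinv2 : ∀ (ω : V → Bool), (∀ u, ω (σ u) = ω u) → ∀ v u,
      move G (move G ω v) (σ v) (σ u) = move G (move G ω v) (σ v) u := by
    intro ω hω v u
    have h1 : (σ u ∈ closedNbhd G (σ v)) = (u ∈ closedNbhd G v) := by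
      rw [eq_iff_iff]; exact hmem u v
    have h2 : (σ u ∈ closedNbhd G v) = (u ∈ closedNbhd G (σ v)) := by
      rw [eq_iff_iff]; exact hmemσ u v
    simp only [move, h1, h2, hω]
    by_cases ha : u ∈ closedNbhd G v <;> by_cases hb : u ∈ closedNbhd G (σ v) <;>
      simp [ha, hb]
  intro n
  induction n with
  | zero => intro ω hw _; omega
  | succ n ih =>
    intro ω hw hω
    rw [grundy]
    apply mex_eq_zero
    intro h0
    rw [Finset.mem_image] at h0
    obtain ⟨v, _, hg⟩ := h0
    have hvleg : IsLegal G ω v.1 := (Finset.mem_filter.mp v.2).2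
    rw [grundy] at hg
    refine mex_ne_zero ?_ hg
    rw [Finset.mem_image]
    have hleg2 : IsLegal G (move G ω v.1) (σ v.1) := hlegal ω hω v.1 hvleg
    have hmem2 : σ v.1 ∈ Finset.univ.filter (fun w => IsLegal G (move G ω v.1) w) :=
      Finset.mem_filter.mpr ⟨Finset.mem_univ _, hleg2⟩
    refine ⟨⟨σ v.1, hmem2⟩, Finset.mem_attach _ _, ?_⟩
    show grundy G (move G (move G ω v.1) (σ v.1)) = 0
    apply ih
    · have w1 := weight_move_lt G hvleg
      have w2 := weight_move_lt G hleg2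
      omega
    · exact hinv2 ω hω v.1

/-- Membership in a closed neighborhood of the prism `P(m,1)`. -/
lemma mem_closedNbhd_petersen {m : ℕ} [NeZero m] (hm : 1 < m) (p q : Fin 2 × Fin m) :
    p ∈ closedNbhd (petersen m 1) q ↔
      p.2 = q.2 ∨ (p.1 = q.1 ∧ (q.2 + 1 = p.2 ∨ p.2 + 1 = q.2)) := by
  have hv1 : ((1 : Fin m) : ℕ) = 1 := by
    rw [Fin.val_one']
    exact Nat.mod_eq_of_lt hm
  have hadd : ∀ i j : Fin m, i + 1 = j ↔ ((i : ℕ) + 1) % m = (j : ℕ) := by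
    intro i j
    rw [Fin.ext_iff, Fin.add_def, hv1]
  have hne : ∀ i j : Fin m, ((i : ℕ) + 1) % m = (j : ℕ) → ¬ i = j := by
    intro i j h hij
    subst hij
    rcases Nat.lt_or_ge ((i : ℕ) + 1) m with h' | h'
    · rw [Nat.mod_eq_of_lt h'] at h
      omega
    · have hi := i.isLt
      have hh : (i : ℕ) + 1 = m := by omega
      rw [hh, Nat.mod_self] at h
      omega
  obtain ⟨a, i⟩ := p
  obtain ⟨b, j⟩ := q
  simp only [closedNbhd, Finset.mem_insert, SimpleGraph.mem_neighborFinset]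
  simp only [petersen,
    SimpleGraph.fromRel_adj, Prod.mk.injEq, ne_eq]
  rw [hadd j i, hadd i j]
  have hne1 := hne i j
  have hne2 := hne j i
  have hij : (i = j) ↔ (j = i) := eq_comm
  fin_cases a <;> fin_cases b <;> simp_all <;> tauto

end Toggle

/-- for `k ≥ 3`, the Nimber of `P_{0,1}(2k, 1)` is 0. -/
theorem statement15 (k : ℕ) (hk : 3 ≤ k) :
    Toggle.grundy (Toggle.petersen (2 * k) 1) (Toggle.P01 (2 * k)) = 0 := by
  have hm : 1 < 2 * k := by omega
  have : NeZero (2 * k) := ⟨by omega⟩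
  set kF : Fin (2 * k) := ⟨k, by omega⟩ with hkF
  set σ : Fin 2 × Fin (2 * k) → Fin 2 × Fin (2 * k) := fun p => (p.1, p.2 + kF) with hσ
  have hv1 : ((1 : Fin (2 * k)) : ℕ) = 1 := by
    rw [Fin.val_one']
    exact Nat.mod_eq_of_lt hm
  have hvadd : ∀ (x : Fin (2 * k)), (x : ℕ) + 1 < 2 * k → ((x + 1 : Fin (2 * k)) : ℕ) = (x : ℕ) + 1 := by
    intro x h2
    rw [Fin.add_def, hv1]
    exact Nat.mod_eq_of_lt h2
  have hvkF : (kF : ℕ) = k := rfl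
  have hvkF1 : ((kF + 1 : Fin (2 * k)) : ℕ) = k + 1 := by
    rw [hvadd kF (by omega), hvkF]
  have hvkF2 : ((kF + 1 + 1 : Fin (2 * k)) : ℕ) = k + 2 := by
    rw [hvadd (kF + 1) (by rw [hvkF1]; omega), hvkF1]
  have hv11 : ((1 + 1 : Fin (2 * k)) : ℕ) = 2 := by
    rw [hvadd 1 (by rw [hv1]; omega), hv1]
  have hne0 : kF ≠ 0 := by
    intro h
    have := congrArg Fin.val h
    rw [hvkF, Fin.val_zero] at this
    omega
  have hne1 : kF ≠ 1 := by
    intro h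
    have := congrArg Fin.val h
    rw [hvkF, hv1] at this
    omega
  have hne2 : kF ≠ 1 + 1 := by
    intro h
    have := congrArg Fin.val h
    rw [hvkF, hv11] at this
    omega
  have hne1' : kF + 1 ≠ 0 := by
    intro h
    have := congrArg Fin.val h
    rw [hvkF1, Fin.val_zero] at this
    omega
  have hne2' : kF + 1 + 1 ≠ 0 := by
    intro h
    have := congrArg Fin.val h
    rw [hvkF2, Fin.val_zero] at this
    omega
  have hkk : kF + kF = (0 : Fin (2 * k)) := by
    apply Fin.ext
    rw [Fin.add_def]
    show (k + k) % (2 * k) = ((0 : Fin (2 * k)) : ℕ)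
    rw [Fin.val_zero, show k + k = 2 * k from by omega, Nat.mod_self]
  have hinvσ : ∀ p, σ (σ p) = p := by
    intro p
    show (p.1, p.2 + kF + kF) = p
    rw [add_assoc, hkk, add_zero]
  have hc : ∀ x y : Fin (2 * k), x + kF = y + kF ↔ x = y := by
    intro x y
    constructor
    · exact fun h => add_right_cancel h
    · intro h; rw [h]
  have hmemN : ∀ p q, σ p ∈ Toggle.closedNbhd (Toggle.petersen (2 * k) 1) (σ q) ↔
      p ∈ Toggle.closedNbhd (Toggle.petersen (2 * k) 1) q := by
    intro p q
    rw [Toggle.mem_closedNbhd_petersen hm, Toggle.mem_closedNbhd_petersen hm]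
    show p.2 + kF = q.2 + kF ∨ (p.1 = q.1 ∧ (q.2 + kF + 1 = p.2 + kF ∨ p.2 + kF + 1 = q.2 + kF)) ↔ _
    simp only [show ∀ x : Fin (2 * k), x + kF + 1 = x + 1 + kF from fun x => add_right_comm x kF 1,
      hc]
  have hdisjN : ∀ q p, p ∈ Toggle.closedNbhd (Toggle.petersen (2 * k) 1) q →
      p ∉ Toggle.closedNbhd (Toggle.petersen (2 * k) 1) (σ q) := by
    intro q p h1 h2
    rw [Toggle.mem_closedNbhd_petersen hm] at h1 h2
    have h2' : p.2 = q.2 + kF ∨ (p.1 = q.1 ∧ (q.2 + kF + 1 = p.2 ∨ p.2 + 1 = q.2 + kF)) := h2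
    rcases h1 with h1 | ⟨_, h1 | h1⟩ <;> rcases h2' with h2 | ⟨_, h2 | h2⟩
    · exact hne0 (by open Fin.CommRing in linear_combination h1 - h2)
    · exact hne1' (by open Fin.CommRing in linear_combination h1 + h2)
    · exact hne1 (by open Fin.CommRing in linear_combination h1 - h2)
    · exact hne1 (by open Fin.CommRing in linear_combination -h1 - h2)
    · exact hne0 (by open Fin.CommRing in linear_combination h2 - h1)
    · exact hne2 (by open Fin.CommRing in linear_combination -h1 - h2)
    · exact hne1' (by open Fin.CommRing in linear_combination h1 - h2)
    · exact hne2' (by open Fin.CommRing in linear_combination h1 + h2)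
    · exact hne0 (by open Fin.CommRing in linear_combination h1 - h2)
  have hω : ∀ p, Toggle.P01 (2 * k) (σ p) = Toggle.P01 (2 * k) p := fun p => rfl
  exact Toggle.symm_grundy_zero _ σ hinvσ hmemN hdisjN
    (Toggle.weight (Toggle.P01 (2 * k)) + 1) _ (Nat.lt_succ_self _) hω
end

section
/- In a game of Toggle starting from the position P_{1,0}(m,2) on the generalized Petersen graph P(m,2) (m ≥ 5), every vertex v that is unplayable at some reachable position is terminally unplayable at that position. -/
namespace S17
open Toggle

variable {m : ℕ}

/-- shift a column by `k` (mod `m`). -/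
def sh (k : ℕ) (i : Fin m) : Fin m :=
  ⟨((i : ℕ) + k) % m, Nat.mod_lt _ (Nat.lt_of_le_of_lt (Nat.zero_le _) i.isLt)⟩

lemma shval (k : ℕ) (i : Fin m) : ((sh k i : Fin m) : ℕ) = ((i : ℕ) + k) % m := rfl

lemma mod2m {a : ℕ} (hm : 0 < m) (h : a < 2 * m) :
    a % m = if a < m then a else a - m := by
  split
  · exact Nat.mod_eq_of_lt ‹_›
  · rw [Nat.mod_eq_sub_mod (by omega)]
    exact Nat.mod_eq_of_lt (by omega)

lemma sh_cancel {k : ℕ} (hk : k ≤ m) (i : Fin m) : sh (m - k) (sh k i) = i := by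
  apply Fin.ext
  rw [shval, shval, Nat.mod_add_mod]
  have h : (i : ℕ) + k + (m - k) = (i : ℕ) + m := by omega
  rw [h, Nat.add_mod_right, Nat.mod_eq_of_lt i.isLt]

lemma sh_cancel' {k : ℕ} (hk : k ≤ m) (i : Fin m) : sh k (sh (m - k) i) = i := by
  apply Fin.ext
  rw [shval, shval, Nat.mod_add_mod]
  have h : (i : ℕ) + (m - k) + k = (i : ℕ) + m := by omega
  rw [h, Nat.add_mod_right, Nat.mod_eq_of_lt i.isLt]

lemma sh_ne {k : ℕ} (hk : 0 < k) (hk2 : k < m) (i : Fin m) : sh k i ≠ i := by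
  intro h
  have h1 := congrArg Fin.val h
  rw [shval, mod2m (by omega) (by have := i.isLt; omega)] at h1
  have hi := i.isLt
  split at h1 <;> omega

lemma sh_ne' {k l : ℕ} (hk : k < l) (hl : l < m) (i : Fin m) :
    sh k i ≠ sh l i := by
  intro h
  have h1 := congrArg Fin.val h
  rw [shval, shval, mod2m (by omega) (by have := i.isLt; omega),
    mod2m (by omega) (by have := i.isLt; omega)] at h1
  have hi := i.isLt
  split at h1 <;> split at h1 <;> omega

lemma minusk_iff {k : ℕ} (hk : k ≤ m) (i j : Fin m) :
    ((j : ℕ) + k) % m = (i : ℕ) ↔ j = sh (m - k) i := by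
  constructor
  · intro h
    have h2 : sh k j = i := Fin.ext h
    rw [← h2, sh_cancel hk]
  · intro h
    subst h
    exact congrArg Fin.val (sh_cancel' hk i)

lemma shswap {k : ℕ} (hk : k ≤ m) (i j : Fin m) : i = sh (m - k) j ↔ j = sh k i := by
  constructor
  · intro h; subst h; exact (sh_cancel' hk j).symm
  · intro h; subst h; exact (sh_cancel hk i).symm

end S17

namespace S17
open Toggle

variable {m : ℕ}

lemma cn_inner (hm : 5 ≤ m) (i : Fin m) :
    closedNbhd (petersen m 2) ((1 : Fin 2), i) =
      {((1:Fin 2), i), ((0:Fin 2), i), ((1:Fin 2), sh 2 i), ((1:Fin 2), sh (m-2) i)} := by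
  have h2 : sh 2 i ≠ i := sh_ne (by omega) (by omega) i
  ext ⟨a, j⟩
  simp only [closedNbhd, Finset.mem_insert, SimpleGraph.mem_neighborFinset]
  simp only [petersen,
    SimpleGraph.fromRel_adj, Finset.mem_singleton, Prod.mk.injEq]
  have h3 : j = sh 2 i → ¬ i = j := fun h h' => h2 (h' ▸ h.symm)
  have h4 : i = sh 2 j → ¬ i = j :=
    fun h h' => (sh_ne (k := 2) (by omega) (by omega) j) ((h' ▸ h).symm)
  fin_cases a <;>
    simp only [Prod.mk.injEq, ne_eq, Prod.ext_iff, minusk_iff (show 2 ≤ m by omega),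
      shswap (show 2 ≤ m by omega), Fin.mk_zero, Fin.mk_one,
      (show ((0:Fin 2) = 1) ↔ False from by decide), (show ((1:Fin 2) = 0) ↔ False from by decide),
      false_and, and_false, true_and, and_true, false_or, or_false, not_and,
      false_implies, true_implies, iff_false, false_iff, forall_false] <;>
    tauto

lemma cn_outer (hm : 5 ≤ m) (i : Fin m) :
    closedNbhd (petersen m 2) ((0 : Fin 2), i) =
      {((0:Fin 2), i), ((1:Fin 2), i), ((0:Fin 2), sh 1 i), ((0:Fin 2), sh (m-1) i)} := by
  have h1 : sh 1 i ≠ i := sh_ne (by omega) (by omega) i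
  ext ⟨a, j⟩
  simp only [closedNbhd, Finset.mem_insert, SimpleGraph.mem_neighborFinset]
  simp only [petersen,
    SimpleGraph.fromRel_adj, Finset.mem_singleton, Prod.mk.injEq]
  have h3 : j = sh 1 i → ¬ i = j := fun h h' => h1 (h' ▸ h.symm)
  have h4 : i = sh 1 j → ¬ i = j :=
    fun h h' => (sh_ne (k := 1) (by omega) (by omega) j) ((h' ▸ h).symm)
  fin_cases a <;>
    simp only [Prod.mk.injEq, ne_eq, Prod.ext_iff, minusk_iff (show 1 ≤ m by omega),
      shswap (show 1 ≤ m by omega), Fin.mk_zero, Fin.mk_one,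
      (show ((0:Fin 2) = 1) ↔ False from by decide), (show ((1:Fin 2) = 0) ↔ False from by decide),
      false_and, and_false, true_and, and_true, false_or, or_false, not_and,
      false_implies, true_implies, iff_false, false_iff, forall_false] <;>
    tauto

end S17

namespace S17
open Toggle

variable {m : ℕ}

lemma card_filter_four {α : Type*} [DecidableEq α] {a b c d : α}
    (hab : a ≠ b) (hac : a ≠ c) (had : a ≠ d) (hbc : b ≠ c) (hbd : b ≠ d) (hcd : c ≠ d)
    (ω : α → Bool) :
    ((({a,b,c,d} : Finset α)).filter (fun u => ω u = true)).card
      = (ω a).toNat + (ω b).toNat + (ω c).toNat + (ω d).toNat := by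
  rw [Finset.card_filter]
  rw [Finset.sum_insert (by simp [hab, hac, had]),
    Finset.sum_insert (by simp [hbc, hbd]),
    Finset.sum_insert (by simp [hcd]), Finset.sum_singleton]
  cases ha : ω a <;> cases hb : ω b <;> cases hc : ω c <;> cases hd : ω d <;> simp
    <;> omega

lemma card_four {α : Type*} [DecidableEq α] {a b c d : α}
    (hab : a ≠ b) (hac : a ≠ c) (had : a ≠ d) (hbc : b ≠ c) (hbd : b ≠ d) (hcd : c ≠ d) :
    (({a,b,c,d} : Finset α)).card = 4 := by
  rw [Finset.card_insert_of_notMem (by simp [hab, hac, had]),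
    Finset.card_insert_of_notMem (by simp [hbc, hbd]),
    Finset.card_insert_of_notMem (by simp [hcd]), Finset.card_singleton]

section
variable (hm : 5 ≤ m)
include hm

lemma ne_i_sh2 (i : Fin m) : i ≠ sh 2 i := (sh_ne (by omega) (by omega) i).symm
lemma ne_i_shm2 (i : Fin m) : i ≠ sh (m-2) i := (sh_ne (by omega) (by omega) i).symm
lemma ne_sh2_shm2 (i : Fin m) : sh 2 i ≠ sh (m-2) i := sh_ne' (by omega) (by omega) i
lemma ne_i_sh1 (i : Fin m) : i ≠ sh 1 i := (sh_ne (by omega) (by omega) i).symm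
lemma ne_i_shm1 (i : Fin m) : i ≠ sh (m-1) i := (sh_ne (by omega) (by omega) i).symm
lemma ne_sh1_shm1 (i : Fin m) : sh 1 i ≠ sh (m-1) i := sh_ne' (by omega) (by omega) i

lemma nw_inner (ω : Fin 2 × Fin m → Bool) (i : Fin m) :
    nbhdWeight (petersen m 2) ω ((1:Fin 2), i)
      = (ω ((1:Fin 2), i)).toNat + (ω ((0:Fin 2), i)).toNat
        + (ω ((1:Fin 2), sh 2 i)).toNat + (ω ((1:Fin 2), sh (m-2) i)).toNat := by
  rw [nbhdWeight, cn_inner hm]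
  exact card_filter_four (by simp) (by simp [ne_i_sh2 hm i])
    (by simp [ne_i_shm2 hm i]) (by simp) (by simp) (by simp [ne_sh2_shm2 hm i]) ω

lemma nw_outer (ω : Fin 2 × Fin m → Bool) (i : Fin m) :
    nbhdWeight (petersen m 2) ω ((0:Fin 2), i)
      = (ω ((0:Fin 2), i)).toNat + (ω ((1:Fin 2), i)).toNat
        + (ω ((0:Fin 2), sh 1 i)).toNat + (ω ((0:Fin 2), sh (m-1) i)).toNat := by
  rw [nbhdWeight, cn_outer hm]
  exact card_filter_four (by simp) (by simp [ne_i_sh1 hm i])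
    (by simp [ne_i_shm1 hm i]) (by simp) (by simp) (by simp [ne_sh1_shm1 hm i]) ω

lemma card_cn_inner (i : Fin m) :
    (closedNbhd (petersen m 2) ((1:Fin 2), i)).card = 4 := by
  rw [cn_inner hm]
  exact card_four (by simp) (by simp [ne_i_sh2 hm i])
    (by simp [ne_i_shm2 hm i]) (by simp) (by simp) (by simp [ne_sh2_shm2 hm i])

lemma card_cn_outer (i : Fin m) :
    (closedNbhd (petersen m 2) ((0:Fin 2), i)).card = 4 := by
  rw [cn_outer hm]
  exact card_four (by simp) (by simp [ne_i_sh1 hm i])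
    (by simp [ne_i_shm1 hm i]) (by simp) (by simp) (by simp [ne_sh1_shm1 hm i])

end

lemma nw_move_add {V : Type*} [Fintype V] [DecidableEq V] (G : SimpleGraph V)
    [DecidableRel G.Adj] (ω : V → Bool) (v : V) :
    nbhdWeight G (move G ω v) v + nbhdWeight G ω v = (closedNbhd G v).card := by
  unfold nbhdWeight
  have h : (closedNbhd G v).filter (fun u => move G ω v u = true)
      = (closedNbhd G v).filter (fun u => ¬ (ω u = true)) := by
    apply Finset.filter_congr
    intro u hu
    simp [move, hu]
  rw [h, add_comm, Finset.card_filter_add_card_filter_not]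

lemma legal_iff {V : Type*} [Fintype V] [DecidableEq V] (G : SimpleGraph V)
    [DecidableRel G.Adj] (ω : V → Bool) (v : V) :
    IsLegal G ω v ↔ ω v = true ∧ (closedNbhd G v).card < 2 * nbhdWeight G ω v := by
  unfold IsLegal
  have := nw_move_add G ω v
  constructor <;> rintro ⟨h1, h2⟩ <;> exact ⟨h1, by omega⟩

end S17

namespace S17
open Toggle

variable {m : ℕ}

lemma sh_sh (a b : ℕ) (i : Fin m) : sh a (sh b i) = sh (b + a) i := by
  apply Fin.ext
  rw [shval, shval, shval, Nat.mod_add_mod, Nat.add_assoc]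

lemma sh_reduce (k : ℕ) (i : Fin m) : sh (k + m) i = sh k i := by
  apply Fin.ext
  rw [shval, shval, ← Nat.add_assoc, Nat.add_mod_right]

/-- The invariant maintained by play from `P10`. -/
def Inv (m : ℕ) (ω : Fin 2 × Fin m → Bool) : Prop :=
  ∀ i : Fin m, ω ((0:Fin 2), i) = true →
    ω ((1:Fin 2), i) = false ∧ ω ((1:Fin 2), sh 2 i) = false ∧
    ω ((1:Fin 2), sh (m-2) i) = false ∧ ω ((0:Fin 2), sh 2 i) = false

section
variable (hm : 5 ≤ m)
include hm

lemma move_inner_outer (ω : Fin 2 × Fin m → Bool) (i j : Fin m) :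
    move (petersen m 2) ω ((1:Fin 2), i) ((0:Fin 2), j)
      = if j = i then !(ω ((0:Fin 2), j)) else ω ((0:Fin 2), j) := by
  have h : (((0:Fin 2), j) ∈ closedNbhd (petersen m 2) ((1:Fin 2), i)) ↔ j = i := by
    rw [cn_inner hm]
    simp [Prod.ext_iff]
  simp only [move, h]

lemma move_inner_inner (ω : Fin 2 × Fin m → Bool) (i j : Fin m) :
    move (petersen m 2) ω ((1:Fin 2), i) ((1:Fin 2), j)
      = if j = i ∨ j = sh 2 i ∨ j = sh (m-2) i then !(ω ((1:Fin 2), j))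
        else ω ((1:Fin 2), j) := by
  have h : (((1:Fin 2), j) ∈ closedNbhd (petersen m 2) ((1:Fin 2), i))
      ↔ (j = i ∨ j = sh 2 i ∨ j = sh (m-2) i) := by
    rw [cn_inner hm]
    simp [Prod.ext_iff]
  simp only [move, h]

lemma not_legal_outer {ω : Fin 2 × Fin m → Bool} (hInv : Inv m ω) (i : Fin m) :
    ¬ IsLegal (petersen m 2) ω ((0:Fin 2), i) := by
  rw [legal_iff, card_cn_outer hm, nw_outer hm]
  rintro ⟨h0, hlt⟩
  have h1 : ω ((1:Fin 2), i) = false := (hInv i h0).1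
  have h2 : ω ((0:Fin 2), sh 1 i) = true := by
    cases hx : ω ((0:Fin 2), sh 1 i) <;> cases hy : ω ((0:Fin 2), sh (m-1) i) <;>
      simp_all <;> omega
  have h3 : ω ((0:Fin 2), sh (m-1) i) = true := by
    cases hy : ω ((0:Fin 2), sh (m-1) i) <;> simp_all <;> omega
  have h4 := (hInv _ h3).2.2.2
  rw [sh_sh, show m - 1 + 2 = 1 + m by omega, sh_reduce] at h4
  rw [h4] at h2
  exact Bool.false_ne_true h2

lemma u_false_of_w {ω : Fin 2 × Fin m → Bool} (hInv : Inv m ω) {i : Fin m}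
    (h : ω ((1:Fin 2), i) = true) : ω ((0:Fin 2), i) = false := by
  cases hx : ω ((0:Fin 2), i)
  · rfl
  · rw [(hInv i hx).1] at h; exact absurd h (by simp)

lemma legal_inner_iff {ω : Fin 2 × Fin m → Bool} (hInv : Inv m ω) (i : Fin m) :
    IsLegal (petersen m 2) ω ((1:Fin 2), i) ↔
      ω ((1:Fin 2), i) = true ∧ ω ((1:Fin 2), sh 2 i) = true ∧
        ω ((1:Fin 2), sh (m-2) i) = true := by
  rw [legal_iff, card_cn_inner hm, nw_inner hm]
  constructor
  · rintro ⟨h1, hlt⟩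
    have h0 : ω ((0:Fin 2), i) = false := u_false_of_w hm hInv h1
    refine ⟨h1, ?_, ?_⟩ <;>
      (cases hx : ω ((1:Fin 2), sh 2 i) <;> cases hy : ω ((1:Fin 2), sh (m-2) i) <;>
        simp_all <;> omega)
  · rintro ⟨h1, h2, h3⟩
    have h0 : ω ((0:Fin 2), i) = false := u_false_of_w hm hInv h1
    rw [h1, h2, h3, h0]
    exact ⟨rfl, by simp⟩

lemma step_main {ω ω' : Fin 2 × Fin m → Bool} (hInv : Inv m ω)
    (h : Step (petersen m 2) ω ω') :
    Inv m ω' ∧ ∀ j : Fin m, ω ((1:Fin 2), j) = false → ω' ((1:Fin 2), j) = false := by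
  obtain ⟨⟨a, i⟩, hleg, rfl⟩ := h
  fin_cases a
  · exact absurd hleg (not_legal_outer hm hInv i)
  · simp only [Fin.mk_one] at hleg ⊢
    rw [legal_inner_iff hm hInv] at hleg
    obtain ⟨hw, hw2, hwm2⟩ := hleg
    have hu : ω ((0:Fin 2), i) = false := u_false_of_w hm hInv hw
    have mono : ∀ j : Fin m, ω ((1:Fin 2), j) = false →
        move (petersen m 2) ω ((1:Fin 2), i) ((1:Fin 2), j) = false := by
      intro j hj
      rw [move_inner_inner hm, if_neg, hj]
      rintro (rfl | rfl | rfl) <;> simp_all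
    refine ⟨?_, mono⟩
    intro j hj
    rw [move_inner_outer hm] at hj
    by_cases hji : j = i
    · subst hji
      refine ⟨?_, ?_, ?_, ?_⟩
      · rw [move_inner_inner hm, if_pos (Or.inl rfl), hw]; rfl
      · rw [move_inner_inner hm, if_pos (Or.inr (Or.inl rfl)), hw2]; rfl
      · rw [move_inner_inner hm, if_pos (Or.inr (Or.inr rfl)), hwm2]; rfl
      · rw [move_inner_outer hm, if_neg (ne_i_sh2 hm j).symm]
        cases hx : ω ((0:Fin 2), sh 2 j)
        · rfl
        · rw [(hInv _ hx).1] at hw2; exact absurd hw2 (by simp)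
    · rw [if_neg hji] at hj
      obtain ⟨o1, o2, o3, o4⟩ := hInv j hj
      refine ⟨mono _ o1, mono _ o2, mono _ o3, ?_⟩
      rw [move_inner_outer hm]
      by_cases hsj : sh 2 j = i
      · exfalso
        rw [hsj] at o2
        rw [o2] at hw
        exact Bool.false_ne_true hw
      · rw [if_neg hsj]; exact o4

end

lemma reach_main (hm : 5 ≤ m) {ω ω' : Fin 2 × Fin m → Bool} (hInv : Inv m ω)
    (h : Reach (petersen m 2) ω ω') :
    Inv m ω' ∧ ∀ j : Fin m, ω ((1:Fin 2), j) = false → ω' ((1:Fin 2), j) = false := by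
  induction h with
  | refl => exact ⟨hInv, fun _ h => h⟩
  | tail hr hs ih =>
    obtain ⟨ih1, ih2⟩ := ih
    obtain ⟨s1, s2⟩ := step_main hm ih1 hs
    exact ⟨s1, fun j hj => s2 j (ih2 j hj)⟩

lemma inv_P10 : Inv m (P10 m) := by
  intro i h
  simp [P10] at h

end S17

/-- in a game of Toggle on `P(m,2)` (`m ≥ 5`) starting from
`P_{1,0}(m,2)`, every vertex that is unplayable at some reachable position is
terminally unplayable at that position. -/
theorem statement17 (m : ℕ) (hm : 5 ≤ m)
    (ω : Fin 2 × Fin m → Bool)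
    (hr : Toggle.Reach (Toggle.petersen m 2) (Toggle.P10 m) ω)
    (v : Fin 2 × Fin m) (hv : ¬ Toggle.IsLegal (Toggle.petersen m 2) ω v) :
    Toggle.TerminallyUnplayable (Toggle.petersen m 2) ω v := by
  intro ω'' hr2
  have hInvω : S17.Inv m ω := (S17.reach_main hm S17.inv_P10 hr).1
  obtain ⟨hInv'', hmono⟩ := S17.reach_main hm hInvω hr2
  obtain ⟨a, i⟩ := v
  fin_cases a
  · exact S17.not_legal_outer hm hInv'' i
  · simp only [Fin.mk_one] at hv ⊢
    intro hleg
    rw [S17.legal_inner_iff hm hInv''] at hleg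
    rw [S17.legal_inner_iff hm hInvω] at hv
    obtain ⟨l1, l2, l3⟩ := hleg
    have key : ω ((1:Fin 2), i) = false ∨ ω ((1:Fin 2), S17.sh 2 i) = false ∨
        ω ((1:Fin 2), S17.sh (m-2) i) = false := by
      cases h1 : ω ((1:Fin 2), i) <;> cases h2 : ω ((1:Fin 2), S17.sh 2 i) <;>
        cases h3 : ω ((1:Fin 2), S17.sh (m-2) i) <;> simp_all
    rcases key with k | k | k
    · rw [hmono _ k] at l1; exact Bool.false_ne_true l1
    · rw [hmono _ k] at l2; exact Bool.false_ne_true l2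
    · rw [hmono _ k] at l3; exact Bool.false_ne_true l3
end

section
/- For every m ≥ 5, the four Toggle positions P_{0,1}(m,1), P_{1,0}(m,1), P_{0,1}(m,2), and P_{1,0}(m,2) all have the same Nimber: G(P_{0,1}(m,1)) = G(P_{1,0}(m,1)) = G(P_{0,1}(m,2)) = G(P_{1,0}(m,2)). -/
namespace S19
open Toggle
open Fin.NatCast Fin.CommRing

variable {V V' : Type*} [Fintype V] [DecidableEq V] [Fintype V'] [DecidableEq V']

lemma mem_options {G : SimpleGraph V} [DecidableRel G.Adj] {ω : V → Bool} {n : ℕ} :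
    n ∈ ((Finset.univ.filter (fun v => IsLegal G ω v)).attach.image
      (fun v => grundy G (move G ω v.1)))
    ↔ ∃ v, IsLegal G ω v ∧ grundy G (move G ω v) = n := by
  simp only [Finset.mem_image, Finset.mem_attach, true_and, Subtype.exists]
  constructor
  · rintro ⟨v, hv, rfl⟩
    exact ⟨v, by simpa using hv, rfl⟩
  · rintro ⟨v, hv, rfl⟩
    exact ⟨v, by simpa using hv, rfl⟩

lemma grundy_eq_mex (G : SimpleGraph V) [DecidableRel G.Adj] (ω : V → Bool) :
    grundy G ω = mex ((Finset.univ.filter (fun v => IsLegal G ω v)).attach.image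
      (fun v => grundy G (move G ω v.1))) := by rw [grundy]

lemma mex_eq_zero {s : Finset ℕ} (h : 0 ∉ s) : mex s = 0 :=
  Nat.sInf_eq_zero.mpr (Or.inl h)

lemma mex_ne_zero {s : Finset ℕ} (h : 0 ∈ s) : mex s ≠ 0 := by
  intro hc
  have hne : {n : ℕ | n ∉ s}.Nonempty := by
    refine ⟨(s.sup id) + 1, fun hc2 => ?_⟩
    have := Finset.le_sup (f := id) hc2
    exact Nat.not_succ_le_self _ this
  have := Nat.sInf_mem hne
  rw [mex] at hc
  rw [hc] at this
  exact this h

lemma grundy_eq_zero {G : SimpleGraph V} [DecidableRel G.Adj] {ω : V → Bool}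
    (h : ∀ v, IsLegal G ω v → grundy G (move G ω v) ≠ 0) : grundy G ω = 0 := by
  rw [grundy_eq_mex]
  apply mex_eq_zero
  rw [mem_options]
  rintro ⟨v, hv, h0⟩
  exact h v hv h0

lemma grundy_ne_zero {G : SimpleGraph V} [DecidableRel G.Adj] {ω : V → Bool}
    {v : V} (hv : IsLegal G ω v) (h : grundy G (move G ω v) = 0) : grundy G ω ≠ 0 := by
  rw [grundy_eq_mex]
  exact mex_ne_zero (mem_options.mpr ⟨v, hv, h⟩)

/-- Transfer lemma: a weight-preserving correspondence of game trees gives equal Grundy values. -/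
lemma grundy_transfer (G : SimpleGraph V) [DecidableRel G.Adj]
    (G' : SimpleGraph V') [DecidableRel G'.Adj] (σ : V ≃ V')
    (Φ : (V → Bool) → Prop)
    (hclosed : ∀ ω, Φ ω → ∀ v, IsLegal G ω v → Φ (move G ω v))
    (hlegal : ∀ ω, Φ ω → ∀ v, (IsLegal G ω v ↔ IsLegal G' (ω ∘ σ.symm) (σ v)))
    (hmove : ∀ ω, Φ ω → ∀ v, IsLegal G ω v →
      (move G ω v) ∘ σ.symm = move G' (ω ∘ σ.symm) (σ v)) :
    ∀ ω, Φ ω → grundy G ω = grundy G' (ω ∘ σ.symm) := by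
  suffices h : ∀ n ω, weight ω = n → Φ ω → grundy G ω = grundy G' (ω ∘ σ.symm) by
    exact fun ω hΦ => h _ ω rfl hΦ
  intro n
  induction n using Nat.strong_induction_on with
  | _ n ih =>
  intro ω hw hΦ
  subst hw
  rw [grundy_eq_mex, grundy_eq_mex]
  congr 1
  ext n
  rw [mem_options, mem_options]
  constructor
  · rintro ⟨v, hv, rfl⟩
    refine ⟨σ v, (hlegal ω hΦ v).mp hv, ?_⟩
    rw [← hmove ω hΦ v hv]
    exact (ih _ (weight_move_lt G hv) _ rfl (hclosed ω hΦ v hv)).symm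
  · rintro ⟨v', hv', rfl⟩
    obtain ⟨v, rfl⟩ := σ.surjective v'
    have hv : IsLegal G ω v := (hlegal ω hΦ v).mpr hv'
    refine ⟨v, hv, ?_⟩
    rw [← hmove ω hΦ v hv]
    exact (ih _ (weight_move_lt G hv) _ rfl (hclosed ω hΦ v hv))

lemma nbhdWeight_le_card (G : SimpleGraph V) [DecidableRel G.Adj] (ω : V → Bool) (v : V) :
    nbhdWeight G ω v ≤ (closedNbhd G v).card :=
  Finset.card_filter_le _ _

lemma nbhdWeight_move_self (G : SimpleGraph V) [DecidableRel G.Adj] (ω : V → Bool) (v : V) :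
    nbhdWeight G (move G ω v) v = (closedNbhd G v).card - nbhdWeight G ω v := by
  unfold nbhdWeight
  have h1 : (closedNbhd G v).filter (fun u => move G ω v u = true)
      = (closedNbhd G v).filter (fun u => ¬ (ω u = true)) := by
    apply Finset.filter_congr
    intro u hu
    simp [move, hu]
  rw [h1, Finset.filter_not, Finset.card_sdiff_of_subset (Finset.filter_subset _ _)]

lemma isLegal_iff (G : SimpleGraph V) [DecidableRel G.Adj] (ω : V → Bool) (v : V) :
    IsLegal G ω v ↔ ω v = true ∧ (closedNbhd G v).card < 2 * nbhdWeight G ω v := by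
  have h := nbhdWeight_le_card G ω v
  rw [IsLegal, nbhdWeight_move_self]
  exact and_congr_right fun _ => by omega

lemma grundy_mirror (G : SimpleGraph V) [DecidableRel G.Adj] (σ : V ≃ V)
    (hinv : ∀ x, σ (σ x) = x)
    (Φ : (V → Bool) → Prop)
    (hclosed : ∀ ω, Φ ω → ∀ v, IsLegal G ω v → Φ (move G ω v))
    (hequiv : ∀ v, (closedNbhd G v).image σ = closedNbhd G (σ v))
    (hdisj : ∀ ω, Φ ω → (∀ x, ω (σ x) = ω x) → ∀ v, IsLegal G ω v →
      Disjoint (closedNbhd G v) (closedNbhd G (σ v))) :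
    ∀ ω, Φ ω → (∀ x, ω (σ x) = ω x) → grundy G ω = 0 := by
  have hmem : ∀ v x, σ x ∈ closedNbhd G (σ v) ↔ x ∈ closedNbhd G v := by
    intro v x
    rw [← hequiv v]
    exact ⟨fun h => by
      obtain ⟨y, hy, hxy⟩ := Finset.mem_image.mp h
      rwa [← σ.injective hxy], fun h => Finset.mem_image_of_mem _ h⟩
  have hmem2 : ∀ v x, σ x ∈ closedNbhd G v ↔ x ∈ closedNbhd G (σ v) := by
    intro v x
    have := hmem (σ v) x
    rwa [hinv v] at this
  suffices h : ∀ n ω, weight ω = n → Φ ω → (∀ x, ω (σ x) = ω x) → grundy G ω = 0 by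
    exact fun ω hΦ hsym => h _ ω rfl hΦ hsym
  intro n
  induction n using Nat.strong_induction_on with
  | _ n ih =>
  intro ω hw hΦ hsym
  subst hw
  apply grundy_eq_zero
  intro v hv
  have hdis := hdisj ω hΦ hsym v hv
  set ω₁ := move G ω v with hω₁
  have hσv_self : σ v ∈ closedNbhd G (σ v) := Finset.mem_insert_self _ _
  have hσv_not : σ v ∉ closedNbhd G v :=
    fun h => (Finset.disjoint_left.mp hdis h) hσv_self
  have hagree : ∀ u ∈ closedNbhd G (σ v), ω₁ u = ω u := by
    intro u hu
    have : u ∉ closedNbhd G v := fun h => (Finset.disjoint_left.mp hdis h) hu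
    simp [hω₁, move, this]
  have hnw1 : nbhdWeight G ω₁ (σ v) = nbhdWeight G ω (σ v) := by
    unfold nbhdWeight
    congr 1
    apply Finset.filter_congr
    intro u hu
    rw [hagree u hu]
  have hnwσ : nbhdWeight G ω (σ v) = nbhdWeight G ω v := by
    unfold nbhdWeight
    rw [← hequiv v, Finset.filter_image, Finset.card_image_of_injective _ σ.injective]
    congr 1
    apply Finset.filter_congr
    intro u _
    simp [hsym u]
  have hcard : (closedNbhd G (σ v)).card = (closedNbhd G v).card := by
    rw [← hequiv v, Finset.card_image_of_injective _ σ.injective]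
  have hσv_legal : IsLegal G ω₁ (σ v) := by
    rw [isLegal_iff]
    constructor
    · rw [hagree _ hσv_self, hsym v]
      exact hv.1
    · rw [hnw1, hnwσ, hcard]
      exact ((isLegal_iff G ω v).mp hv).2
  set ω₂ := move G ω₁ (σ v) with hω₂
  have hsym2 : ∀ x, ω₂ (σ x) = ω₂ x := by
    intro x
    simp only [hω₂, hω₁, move]
    simp only [hmem, hmem2, hsym]
    by_cases h1 : x ∈ closedNbhd G v <;> by_cases h2 : x ∈ closedNbhd G (σ v) <;> simp [h1, h2]
  have hΦ2 : Φ ω₂ := hclosed ω₁ (hclosed ω hΦ v hv) (σ v) hσv_legal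
  have hlt : weight ω₂ < weight ω :=
    lt_trans (weight_move_lt G hσv_legal) (weight_move_lt G hv)
  exact grundy_ne_zero hσv_legal (ih _ hlt _ rfl hΦ2 hsym2)

lemma mem_closedNbhd_iff (G : SimpleGraph V) [DecidableRel G.Adj] (v x : V) :
    x ∈ closedNbhd G v ↔ x = v ∨ G.Adj v x := by
  simp [closedNbhd]

section Petersen

variable {m : ℕ} [NeZero m]

lemma val_add_natCast (i : Fin m) (c : ℕ) : ((i + (c : Fin m) : Fin m) : ℕ) = ((i:ℕ) + c) % m := by
  rw [Fin.add_def, Fin.val_natCast]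
  show (((i:ℕ) + c % m) % m) = ((i:ℕ) + c) % m
  rw [Nat.add_mod_mod]

lemma add_natCast_iff (i j : Fin m) (c : ℕ) : ((i:ℕ) + c) % m = (j:ℕ) ↔ i + (c : Fin m) = j := by
  rw [Fin.ext_iff, val_add_natCast]

lemma natCast_ne_zero (c : ℕ) (h1 : 0 < c) (h2 : c < m) : ((c : ℕ) : Fin m) ≠ 0 := by
  intro hc
  have h := congrArg Fin.val hc
  rw [Fin.val_natCast, Fin.val_zero, Nat.mod_eq_of_lt h2] at h
  omega

lemma mem_nbhd_outer (hm : 5 ≤ m) (k : ℕ) (i : Fin m) (x : Fin 2 × Fin m) :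
    x ∈ closedNbhd (petersen m k) (0, i) ↔
      x = (0, i) ∨ x = (0, i + 1) ∨ x = (0, i - 1) ∨ x = (1, i) := by
  have h1 : (1 : Fin m) ≠ 0 := by
    have := natCast_ne_zero (m := m) 1 one_pos (by omega); rwa [Nat.cast_one] at this
  have hc1 : ∀ a b : Fin m, ((a:ℕ) + 1) % m = (b:ℕ) ↔ a + 1 = b := by
    intro a b; rw [add_natCast_iff, Nat.cast_one]
  obtain ⟨s, j⟩ := x
  rw [mem_closedNbhd_iff, petersen, SimpleGraph.fromRel_adj]
  simp only [ne_eq, Prod.mk.injEq, (by decide : ((1:Fin 2) = 0) = False),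
    (by decide : ((0:Fin 2) = 1) = False), false_and, and_false, true_and, and_true,
    false_or, or_false, hc1]
  constructor
  · rintro (⟨hs, hj⟩ | ⟨hne, (⟨hs, hj⟩ | ⟨hs, hj⟩) | ⟨hs, hj⟩⟩)
    · exact Or.inl ⟨hs, hj⟩
    · exact Or.inr (Or.inl ⟨hs, hj.symm⟩)
    · exact Or.inr (Or.inr (Or.inr ⟨hs, hj.symm⟩))
    · exact Or.inr (Or.inr (Or.inl ⟨hs, eq_sub_iff_add_eq.mpr hj⟩))
  · rintro (⟨rfl, rfl⟩ | ⟨rfl, rfl⟩ | ⟨rfl, rfl⟩ | ⟨rfl, rfl⟩)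
    · exact Or.inl ⟨rfl, rfl⟩
    · exact Or.inr ⟨fun ⟨_, hj⟩ => h1 (by linear_combination -hj), Or.inl (Or.inl ⟨rfl, rfl⟩)⟩
    · exact Or.inr ⟨fun ⟨_, hj⟩ => h1 (by linear_combination hj), Or.inr ⟨rfl, by ring⟩⟩
    · exact Or.inr ⟨fun ⟨h0, _⟩ => absurd h0 (by decide), Or.inl (Or.inr ⟨rfl, rfl⟩)⟩

lemma mem_nbhd_inner (hm : 5 ≤ m) (k : ℕ) (hk : ((k:ℕ) : Fin m) ≠ 0) (i : Fin m)
    (x : Fin 2 × Fin m) :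
    x ∈ closedNbhd (petersen m k) (1, i) ↔
      x = (1, i) ∨ x = (1, i + (k : Fin m)) ∨ x = (1, i - (k : Fin m)) ∨ x = (0, i) := by
  have hck : ∀ a b : Fin m, ((a:ℕ) + k) % m = (b:ℕ) ↔ a + (k : Fin m) = b := by
    intro a b; rw [add_natCast_iff]
  obtain ⟨s, j⟩ := x
  rw [mem_closedNbhd_iff, petersen, SimpleGraph.fromRel_adj]
  simp only [ne_eq, Prod.mk.injEq, (by decide : ((1:Fin 2) = 0) = False),
    (by decide : ((0:Fin 2) = 1) = False), false_and, and_false, true_and, and_true,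
    false_or, or_false, hck]
  constructor
  · rintro (⟨hs, hj⟩ | ⟨hne, ⟨hs, hj⟩ | ⟨hs, hj⟩ | ⟨hs, hj⟩⟩)
    · exact Or.inl ⟨hs, hj⟩
    · exact Or.inr (Or.inl ⟨hs, hj.symm⟩)
    · exact Or.inr (Or.inr (Or.inr ⟨hs, hj⟩))
    · exact Or.inr (Or.inr (Or.inl ⟨hs, eq_sub_iff_add_eq.mpr hj⟩))
  · rintro (⟨rfl, rfl⟩ | ⟨rfl, rfl⟩ | ⟨rfl, rfl⟩ | ⟨rfl, rfl⟩)
    · exact Or.inl ⟨rfl, rfl⟩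
    · exact Or.inr ⟨fun ⟨_, hj⟩ => hk (by linear_combination -hj), Or.inl ⟨rfl, rfl⟩⟩
    · exact Or.inr ⟨fun ⟨_, hj⟩ => hk (by linear_combination hj),
        Or.inr (Or.inr ⟨rfl, by ring⟩)⟩
    · exact Or.inr ⟨fun ⟨h0, _⟩ => absurd h0 (by decide), Or.inr (Or.inl ⟨rfl, rfl⟩)⟩

/-- indicator -/
def bw (b : Bool) : ℕ := if b = true then 1 else 0

lemma bw_le_one (b : Bool) : bw b ≤ 1 := by cases b <;> simp [bw]

lemma card_filter_four {α : Type*} [DecidableEq α] (p : α → Prop) [DecidablePred p]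
    (a b c d : α) (hab : a ≠ b) (hac : a ≠ c) (had : a ≠ d) (hbc : b ≠ c) (hbd : b ≠ d)
    (hcd : c ≠ d) :
    (({a, b, c, d} : Finset α).filter p).card
      = (if p a then 1 else 0) + (if p b then 1 else 0) + (if p c then 1 else 0)
        + (if p d then 1 else 0) := by
  rw [Finset.card_filter]
  rw [show ({a, b, c, d} : Finset α) = insert a (insert b (insert c ({d} : Finset α))) from rfl]
  rw [Finset.sum_insert (by simp [hab, hac, had]), Finset.sum_insert (by simp [hbc, hbd]),
    Finset.sum_insert (by simp [hcd]), Finset.sum_singleton]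
  ring

lemma card_four {α : Type*} [DecidableEq α]
    (a b c d : α) (hab : a ≠ b) (hac : a ≠ c) (had : a ≠ d) (hbc : b ≠ c) (hbd : b ≠ d)
    (hcd : c ≠ d) : ({a, b, c, d} : Finset α).card = 4 := by
  rw [show ({a, b, c, d} : Finset α) = insert a (insert b (insert c ({d} : Finset α))) from rfl]
  rw [Finset.card_insert_of_notMem (by simp [hab, hac, had]),
    Finset.card_insert_of_notMem (by simp [hbc, hbd]),
    Finset.card_insert_of_notMem (by simp [hcd]), Finset.card_singleton]

section Facts
variable (hm : 5 ≤ m)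
include hm

lemma one_ne : (1 : Fin m) ≠ 0 := by
  have := natCast_ne_zero (m := m) 1 one_pos (by omega); rwa [Nat.cast_one] at this

lemma two_ne : (2 : Fin m) ≠ 0 := by
  have := natCast_ne_zero (m := m) 2 two_pos (by omega); rwa [Nat.cast_ofNat] at this

lemma three_ne : (3 : Fin m) ≠ 0 := by
  have := natCast_ne_zero (m := m) 3 three_pos (by omega); rwa [Nat.cast_ofNat] at this

lemma four_ne : (4 : Fin m) ≠ 0 := by
  have := natCast_ne_zero (m := m) 4 four_pos (by omega); rwa [Nat.cast_ofNat] at this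

end Facts

lemma nbhd_outer_eq (hm : 5 ≤ m) (k : ℕ) (i : Fin m) :
    closedNbhd (petersen m k) (0, i)
      = ({((0:Fin 2), i), (0, i + 1), (0, i - 1), (1, i)} : Finset (Fin 2 × Fin m)) := by
  ext x
  rw [mem_nbhd_outer hm k i x]
  simp [Finset.mem_insert]

lemma nbhd_inner_eq (hm : 5 ≤ m) (k : ℕ) (hk : ((k:ℕ) : Fin m) ≠ 0) (i : Fin m) :
    closedNbhd (petersen m k) (1, i)
      = ({((1:Fin 2), i), (1, i + (k : Fin m)), (1, i - (k : Fin m)), (0, i)}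
          : Finset (Fin 2 × Fin m)) := by
  ext x
  rw [mem_nbhd_inner hm k hk i x]
  simp [Finset.mem_insert]

lemma outer_distinct (hm : 5 ≤ m) (i : Fin m) :
    ((0:Fin 2), i) ≠ (0, i + 1) ∧ ((0:Fin 2), i) ≠ (0, i - 1) ∧ ((0:Fin 2), i) ≠ (1, i) ∧
    ((0:Fin 2), i + 1) ≠ (0, i - 1) ∧ ((0:Fin 2), i + 1) ≠ (1, i) ∧
    ((0:Fin 2), i - 1) ≠ (1, i) := by
  have h1 := one_ne hm
  have h2 := two_ne hm
  refine ⟨?_, ?_, ?_, ?_, ?_, ?_⟩ <;> intro h <;> rw [Prod.mk.injEq] at h <;>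
    first
    | exact absurd h.1 (by decide)
    | exact h1 (by linear_combination h.2)
    | exact h1 (by linear_combination -h.2)
    | exact h2 (by linear_combination h.2)
    | exact h2 (by linear_combination -h.2)

lemma inner_distinct (hm : 5 ≤ m) (c : Fin m) (hc : c ≠ 0) (hcc : c + c ≠ 0) (i : Fin m) :
    ((1:Fin 2), i) ≠ (1, i + c) ∧ ((1:Fin 2), i) ≠ (1, i - c) ∧ ((1:Fin 2), i) ≠ (0, i) ∧
    ((1:Fin 2), i + c) ≠ (1, i - c) ∧ ((1:Fin 2), i + c) ≠ (0, i) ∧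
    ((1:Fin 2), i - c) ≠ (0, i) := by
  refine ⟨?_, ?_, ?_, ?_, ?_, ?_⟩ <;> intro h <;> rw [Prod.mk.injEq] at h <;>
    first
    | exact absurd h.1 (by decide)
    | exact hc (by linear_combination h.2)
    | exact hc (by linear_combination -h.2)
    | exact hcc (by linear_combination h.2)
    | exact hcc (by linear_combination -h.2)

lemma nbw_outer (hm : 5 ≤ m) (k : ℕ) (ω : Fin 2 × Fin m → Bool) (i : Fin m) :
    nbhdWeight (petersen m k) ω (0, i)
      = bw (ω (0, i)) + bw (ω (0, i + 1)) + bw (ω (0, i - 1)) + bw (ω (1, i)) := by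
  obtain ⟨d1, d2, d3, d4, d5, d6⟩ := outer_distinct hm i
  rw [nbhdWeight, nbhd_outer_eq hm k i, card_filter_four _ _ _ _ _ d1 d2 d3 d4 d5 d6]
  simp [bw]

lemma nbw_inner (hm : 5 ≤ m) (k : ℕ) (hk : ((k:ℕ) : Fin m) ≠ 0)
    (hkk : ((k:ℕ) : Fin m) + ((k:ℕ) : Fin m) ≠ 0) (ω : Fin 2 × Fin m → Bool) (i : Fin m) :
    nbhdWeight (petersen m k) ω (1, i)
      = bw (ω (1, i)) + bw (ω (1, i + (k : Fin m))) + bw (ω (1, i - (k : Fin m)))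
        + bw (ω (0, i)) := by
  obtain ⟨d1, d2, d3, d4, d5, d6⟩ := inner_distinct hm _ hk hkk i
  rw [nbhdWeight, nbhd_inner_eq hm k hk i, card_filter_four _ _ _ _ _ d1 d2 d3 d4 d5 d6]
  simp [bw]

lemma card_nbhd_outer (hm : 5 ≤ m) (k : ℕ) (i : Fin m) :
    (closedNbhd (petersen m k) (0, i)).card = 4 := by
  obtain ⟨d1, d2, d3, d4, d5, d6⟩ := outer_distinct hm i
  rw [nbhd_outer_eq hm k i, card_four _ _ _ _ d1 d2 d3 d4 d5 d6]

lemma card_nbhd_inner (hm : 5 ≤ m) (k : ℕ) (hk : ((k:ℕ) : Fin m) ≠ 0)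
    (hkk : ((k:ℕ) : Fin m) + ((k:ℕ) : Fin m) ≠ 0) (i : Fin m) :
    (closedNbhd (petersen m k) (1, i)).card = 4 := by
  obtain ⟨d1, d2, d3, d4, d5, d6⟩ := inner_distinct hm _ hk hkk i
  rw [nbhd_inner_eq hm k hk i, card_four _ _ _ _ d1 d2 d3 d4 d5 d6]

lemma isLegal_outer (hm : 5 ≤ m) (k : ℕ) (ω : Fin 2 × Fin m → Bool) (i : Fin m) :
    IsLegal (petersen m k) ω (0, i) ↔ ω (0, i) = true ∧
      4 < 2 * (bw (ω (0, i)) + bw (ω (0, i + 1)) + bw (ω (0, i - 1)) + bw (ω (1, i))) := by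
  rw [isLegal_iff, card_nbhd_outer hm k i, nbw_outer hm k ω i]

lemma isLegal_inner (hm : 5 ≤ m) (k : ℕ) (hk : ((k:ℕ) : Fin m) ≠ 0)
    (hkk : ((k:ℕ) : Fin m) + ((k:ℕ) : Fin m) ≠ 0) (ω : Fin 2 × Fin m → Bool) (i : Fin m) :
    IsLegal (petersen m k) ω (1, i) ↔ ω (1, i) = true ∧
      4 < 2 * (bw (ω (1, i)) + bw (ω (1, i + (k : Fin m))) + bw (ω (1, i - (k : Fin m)))
        + bw (ω (0, i))) := by
  rw [isLegal_iff, card_nbhd_inner hm k hk hkk i, nbw_inner hm k hk hkk ω i]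

lemma bw_eq_one {b : Bool} (h : b = true) : bw b = 1 := by rw [h]; rfl
lemma bw_eq_zero {b : Bool} (h : b = false) : bw b = 0 := by rw [h]; rfl

lemma move_outer_u (hm : 5 ≤ m) (k : ℕ) (ω : Fin 2 × Fin m → Bool) (i t : Fin m) :
    move (petersen m k) ω (0, i) (0, t)
      = if t = i ∨ t = i + 1 ∨ t = i - 1 then !(ω (0, t)) else ω (0, t) := by
  simp only [move, mem_nbhd_outer hm k i, Prod.mk.injEq,
    (by decide : (((0:Fin 2)) = 0) = True), (by decide : (((0:Fin 2)) = 1) = False),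
    true_and, false_and, or_false]

lemma move_outer_w (hm : 5 ≤ m) (k : ℕ) (ω : Fin 2 × Fin m → Bool) (i t : Fin m) :
    move (petersen m k) ω (0, i) (1, t)
      = if t = i then !(ω (1, t)) else ω (1, t) := by
  simp only [move, mem_nbhd_outer hm k i, Prod.mk.injEq,
    (by decide : (((1:Fin 2)) = 0) = False), (by decide : (((1:Fin 2)) = 1) = True),
    true_and, false_and, false_or, or_false]

lemma move_inner_w (hm : 5 ≤ m) (k : ℕ) (hk : ((k:ℕ) : Fin m) ≠ 0)
    (ω : Fin 2 × Fin m → Bool) (i t : Fin m) :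
    move (petersen m k) ω (1, i) (1, t)
      = if t = i ∨ t = i + (k : Fin m) ∨ t = i - (k : Fin m) then !(ω (1, t))
        else ω (1, t) := by
  simp only [move, mem_nbhd_inner hm k hk i, Prod.mk.injEq,
    (by decide : (((1:Fin 2)) = 0) = False), (by decide : (((1:Fin 2)) = 1) = True),
    true_and, false_and, or_false]

lemma move_inner_u (hm : 5 ≤ m) (k : ℕ) (hk : ((k:ℕ) : Fin m) ≠ 0)
    (ω : Fin 2 × Fin m → Bool) (i t : Fin m) :
    move (petersen m k) ω (1, i) (0, t)
      = if t = i then !(ω (0, t)) else ω (0, t) := by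
  simp only [move, mem_nbhd_inner hm k hk i, Prod.mk.injEq,
    (by decide : (((0:Fin 2)) = 0) = True), (by decide : (((0:Fin 2)) = 1) = False),
    true_and, false_and, false_or, or_false]

/-- Invariant for the positions reachable from `P01`: the "A" condition. -/
def InvA (ω : Fin 2 × Fin m → Bool) : Prop :=
  ∀ i : Fin m, ω (1, i) = true →
    ω (0, i - 1) = false ∧ ω (0, i) = false ∧ ω (0, i + 1) = false

/-- No two adjacent inner flags. -/
def InvC (ω : Fin 2 × Fin m → Bool) : Prop :=
  ∀ i : Fin m, ¬(ω (1, i) = true ∧ ω (1, i + 1) = true)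

/-- No inner flags in a step-2 triple. -/
def InvB (ω : Fin 2 × Fin m → Bool) : Prop :=
  ∀ i : Fin m, ¬(ω (1, i - 2) = true ∧ ω (1, i) = true ∧ ω (1, i + 2) = true)

def Phi01 (ω : Fin 2 × Fin m → Bool) : Prop := InvA ω ∧ InvC ω ∧ InvB ω

/-- Invariant for the positions reachable from `P10` (step `c`). -/
def InvA' (c : Fin m) (ω : Fin 2 × Fin m → Bool) : Prop :=
  ∀ i : Fin m, ω (0, i) = true →
    ω (1, i - c) = false ∧ ω (1, i) = false ∧ ω (1, i + c) = false

def InvC' (c : Fin m) (ω : Fin 2 × Fin m → Bool) : Prop :=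
  ∀ i : Fin m, ¬(ω (0, i) = true ∧ ω (0, i + c) = true)

def Phi10 (c : Fin m) (ω : Fin 2 × Fin m → Bool) : Prop := InvA' c ω ∧ InvC' c ω

lemma legal_char_01 (hm : 5 ≤ m) (k : ℕ) (hk : ((k:ℕ) : Fin m) ≠ 0)
    (hkk : ((k:ℕ) : Fin m) + ((k:ℕ) : Fin m) ≠ 0) (ω : Fin 2 × Fin m → Bool)
    (hA : InvA ω)
    (htrip : ∀ i, ¬(ω (1, i - (k : Fin m)) = true ∧ ω (1, i) = true ∧
      ω (1, i + (k : Fin m)) = true))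
    (v : Fin 2 × Fin m) :
    IsLegal (petersen m k) ω v ↔ v.1 = 0 ∧ ω (0, v.2 - 1) = true ∧ ω (0, v.2) = true ∧
      ω (0, v.2 + 1) = true := by
  obtain ⟨s, j⟩ := v
  have hs : s = 0 ∨ s = 1 := by omega
  rcases hs with rfl | rfl
  · rw [isLegal_outer hm k ω j]
    simp only [(by decide : (((0:Fin 2)) = 0) = True), true_iff, iff_true, true_and]
    constructor
    · rintro ⟨h1, h2⟩
      have hw : ω (1, j) = false := by
        cases hwj : ω (1, j)
        · rfl
        · exact absurd h1 (by simp [(hA j hwj).2.1])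
      rw [bw_eq_one h1, bw_eq_zero hw] at h2
      have hb1 := bw_le_one (ω (0, j + 1))
      have hb2 := bw_le_one (ω (0, j - 1))
      refine ⟨?_, h1, ?_⟩
      · cases hc : ω (0, j - 1)
        · rw [bw_eq_zero hc] at h2; omega
        · rfl
      · cases hc : ω (0, j + 1)
        · rw [bw_eq_zero hc] at h2; omega
        · rfl
    · rintro ⟨ha, hb, hc⟩
      refine ⟨hb, ?_⟩
      rw [bw_eq_one ha, bw_eq_one hb, bw_eq_one hc]
      omega
  · simp only [(by decide : (((1:Fin 2)) = 0) = False), false_and, iff_false]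
    rw [isLegal_inner hm k hk hkk ω j]
    rintro ⟨h1, h2⟩
    have hu : ω (0, j) = false := (hA j h1).2.1
    cases hb : ω (1, j + (k : Fin m))
    · rw [bw_eq_one h1, bw_eq_zero hu, bw_eq_zero hb] at h2
      have := bw_le_one (ω (1, j - (k : Fin m)))
      omega
    · cases hc : ω (1, j - (k : Fin m))
      · rw [bw_eq_one h1, bw_eq_zero hu, bw_eq_zero hc] at h2
        have := bw_le_one (ω (1, j + (k : Fin m)))
        omega
      · exact htrip j ⟨hc, h1, hb⟩

lemma legal_char_10 (hm : 5 ≤ m) (k : ℕ) (hk : ((k:ℕ) : Fin m) ≠ 0)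
    (hkk : ((k:ℕ) : Fin m) + ((k:ℕ) : Fin m) ≠ 0) (ω : Fin 2 × Fin m → Bool)
    (hA : InvA' ((k:ℕ) : Fin m) ω)
    (hB : ∀ i, ¬(ω (0, i - 1) = true ∧ ω (0, i) = true ∧ ω (0, i + 1) = true))
    (v : Fin 2 × Fin m) :
    IsLegal (petersen m k) ω v ↔ v.1 = 1 ∧ ω (1, v.2 - (k : Fin m)) = true ∧
      ω (1, v.2) = true ∧ ω (1, v.2 + (k : Fin m)) = true := by
  obtain ⟨s, j⟩ := v
  have hs : s = 0 ∨ s = 1 := by omega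
  rcases hs with rfl | rfl
  · simp only [(by decide : (((0:Fin 2)) = 1) = False), false_and, iff_false]
    rw [isLegal_outer hm k ω j]
    rintro ⟨h1, h2⟩
    have hw : ω (1, j) = false := (hA j h1).2.1
    cases hb : ω (0, j + 1)
    · rw [bw_eq_one h1, bw_eq_zero hw, bw_eq_zero hb] at h2
      have := bw_le_one (ω (0, j - 1))
      omega
    · cases hc : ω (0, j - 1)
      · rw [bw_eq_one h1, bw_eq_zero hw, bw_eq_zero hc] at h2
        have := bw_le_one (ω (0, j + 1))
        omega
      · exact hB j ⟨hc, h1, hb⟩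
  · rw [isLegal_inner hm k hk hkk ω j]
    simp only [(by decide : (((1:Fin 2)) = 1) = True), true_and]
    constructor
    · rintro ⟨h1, h2⟩
      have hu : ω (0, j) = false := by
        cases huj : ω (0, j)
        · rfl
        · exact absurd h1 (by simp [(hA j huj).2.1])
      rw [bw_eq_one h1, bw_eq_zero hu] at h2
      have hb1 := bw_le_one (ω (1, j + (k : Fin m)))
      have hb2 := bw_le_one (ω (1, j - (k : Fin m)))
      refine ⟨?_, h1, ?_⟩
      · cases hc : ω (1, j - (k : Fin m))
        · rw [bw_eq_zero hc] at h2; omega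
        · rfl
      · cases hc : ω (1, j + (k : Fin m))
        · rw [bw_eq_zero hc] at h2; omega
        · rfl
    · rintro ⟨ha, hb, hc⟩
      refine ⟨hb, ?_⟩
      rw [bw_eq_one ha, bw_eq_one hb, bw_eq_one hc]
      omega

lemma cast_one_ne (hm : 5 ≤ m) : ((1:ℕ) : Fin m) ≠ 0 := by
  rw [Nat.cast_one]; exact one_ne hm
lemma cast_one_add (hm : 5 ≤ m) : ((1:ℕ) : Fin m) + ((1:ℕ) : Fin m) ≠ 0 := by
  rw [Nat.cast_one]
  intro h
  exact two_ne hm (by linear_combination h)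
lemma cast_two_ne (hm : 5 ≤ m) : ((2:ℕ) : Fin m) ≠ 0 := by
  rw [Nat.cast_ofNat]; exact two_ne hm
lemma cast_two_add (hm : 5 ≤ m) : ((2:ℕ) : Fin m) + ((2:ℕ) : Fin m) ≠ 0 := by
  rw [Nat.cast_ofNat]
  intro h
  exact four_ne hm (by linear_combination h)

lemma htrip1_of_C {ω : Fin 2 × Fin m → Bool} (hC : InvC ω) :
    ∀ i, ¬(ω (1, i - ((1:ℕ) : Fin m)) = true ∧ ω (1, i) = true ∧
      ω (1, i + ((1:ℕ) : Fin m)) = true) := by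
  intro i ⟨_, h2, h3⟩
  rw [Nat.cast_one] at h3
  exact hC i ⟨h2, h3⟩

lemma htrip2_of_B {ω : Fin 2 × Fin m → Bool} (hB : InvB ω) :
    ∀ i, ¬(ω (1, i - ((2:ℕ) : Fin m)) = true ∧ ω (1, i) = true ∧
      ω (1, i + ((2:ℕ) : Fin m)) = true) := by
  intro i ⟨h1, h2, h3⟩
  rw [Nat.cast_ofNat] at h1 h3
  exact hB i ⟨h1, h2, h3⟩

lemma hB_of_C'1 {ω : Fin 2 × Fin m → Bool} (hC : InvC' ((1:ℕ) : Fin m) ω) :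
    ∀ i, ¬(ω (0, i - 1) = true ∧ ω (0, i) = true ∧ ω (0, i + 1) = true) := by
  intro i ⟨_, h2, h3⟩
  refine hC i ⟨h2, ?_⟩
  rwa [Nat.cast_one]

lemma hB_of_C'2 {ω : Fin 2 × Fin m → Bool} (hC : InvC' ((2:ℕ) : Fin m) ω) :
    ∀ i, ¬(ω (0, i - 1) = true ∧ ω (0, i) = true ∧ ω (0, i + 1) = true) := by
  intro i ⟨h1, _, h3⟩
  refine hC (i - 1) ⟨h1, ?_⟩
  rw [Nat.cast_ofNat, show i - 1 + 2 = i + 1 from by ring]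
  exact h3

lemma phi01_closed' (hm : 5 ≤ m) (ω : Fin 2 × Fin m → Bool) (hΦ : Phi01 ω)
    (j : Fin m) (ht1 : ω (0, j - 1) = true) (ht2 : ω (0, j) = true)
    (ht3 : ω (0, j + 1) = true) :
    Phi01 (move (petersen m 1) ω ((0 : Fin 2), j)) := by
  obtain ⟨hA, hC, hB⟩ := hΦ
  set ω' := move (petersen m 1) ω ((0 : Fin 2), j) with hω'
  have hu' : ∀ t, ω' (0, t) = if t = j ∨ t = j + 1 ∨ t = j - 1 then !(ω (0, t)) else ω (0, t) :=
    fun t => move_outer_u hm 1 ω j t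
  have hw' : ∀ t, ω' (1, t) = if t = j then !(ω (1, t)) else ω (1, t) :=
    fun t => move_outer_w hm 1 ω j t
  have hval : ∀ t, ω (0, t) = false → ω' (0, t) = false := by
    intro t ht
    rw [hu' t]
    split_ifs with hcond
    · rcases hcond with rfl | rfl | rfl
      · rw [ht] at ht2; cases ht2
      · rw [ht] at ht3; cases ht3
      · rw [ht] at ht1; cases ht1
    · exact ht
  refine ⟨?_, ?_, ?_⟩
  · intro i hwi
    by_cases hij : i = j
    · subst hij
      refine ⟨?_, ?_, ?_⟩
      · rw [hu' (i - 1), if_pos (Or.inr (Or.inr rfl)), ht1]; rfl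
      · rw [hu' i, if_pos (Or.inl rfl), ht2]; rfl
      · rw [hu' (i + 1), if_pos (Or.inr (Or.inl rfl)), ht3]; rfl
    · rw [hw' i, if_neg hij] at hwi
      obtain ⟨ha, hb, hc⟩ := hA i hwi
      exact ⟨hval _ ha, hval _ hb, hval _ hc⟩
  · intro i ⟨hx, hy⟩
    rw [hw' i] at hx
    rw [hw' (i + 1)] at hy
    by_cases e1 : i = j <;> by_cases e2 : i + 1 = j
    · exact one_ne hm (by linear_combination e2 - e1)
    · rw [if_neg e2] at hy
      have := (hA (i + 1) hy).1
      rw [show i + 1 - 1 = i from by ring, e1, ht2] at this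
      cases this
    · rw [if_neg e1] at hx
      have := (hA i hx).2.2
      rw [e2, ht2] at this
      cases this
    · rw [if_neg e1] at hx
      rw [if_neg e2] at hy
      exact hC i ⟨hx, hy⟩
  · intro i ⟨hx, hy, hz⟩
    rw [hw' (i - 2)] at hx
    rw [hw' i] at hy
    rw [hw' (i + 2)] at hz
    by_cases e2 : i = j
    · have ne1 : i - 2 ≠ j := fun h => two_ne hm (by linear_combination e2 - h)
      rw [if_neg ne1] at hx
      have := (hA (i - 2) hx).2.2
      rw [show i - 2 + 1 = i - 1 from by ring, e2, ht1] at this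
      cases this
    · rw [if_neg e2] at hy
      by_cases e1 : i - 2 = j
      · have := (hA i hy).1
        rw [show i - 1 = (i - 2) + 1 from by ring, e1, ht3] at this
        cases this
      · by_cases e3 : i + 2 = j
        · have := (hA i hy).2.2
          rw [show i + 1 = (i + 2) - 1 from by ring, e3, ht1] at this
          cases this
        · rw [if_neg e1] at hx
          rw [if_neg e3] at hz
          exact hB i ⟨hx, hy, hz⟩

lemma phi10_closed' (hm : 5 ≤ m) (ω : Fin 2 × Fin m → Bool)
    (hΦ : Phi10 ((2:ℕ) : Fin m) ω) (j : Fin m)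
    (ht1 : ω (1, j - ((2:ℕ) : Fin m)) = true) (ht2 : ω (1, j) = true)
    (ht3 : ω (1, j + ((2:ℕ) : Fin m)) = true) :
    Phi10 ((2:ℕ) : Fin m) (move (petersen m 2) ω ((1 : Fin 2), j)) := by
  obtain ⟨hA, hC⟩ := hΦ
  set c : Fin m := ((2:ℕ) : Fin m) with hc
  set ω' := move (petersen m 2) ω ((1 : Fin 2), j) with hω'
  have hw' : ∀ t, ω' (1, t) = if t = j ∨ t = j + c ∨ t = j - c then !(ω (1, t)) else ω (1, t) :=
    fun t => move_inner_w hm 2 (cast_two_ne hm) ω j t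
  have hu' : ∀ t, ω' (0, t) = if t = j then !(ω (0, t)) else ω (0, t) :=
    fun t => move_inner_u hm 2 (cast_two_ne hm) ω j t
  have hval : ∀ t, ω (1, t) = false → ω' (1, t) = false := by
    intro t ht
    rw [hw' t]
    split_ifs with hcond
    · rcases hcond with rfl | rfl | rfl
      · rw [ht] at ht2; cases ht2
      · rw [ht] at ht3; cases ht3
      · rw [ht] at ht1; cases ht1
    · exact ht
  constructor
  · intro i hui
    by_cases hij : i = j
    · subst hij
      refine ⟨?_, ?_, ?_⟩
      · rw [hw' (i - c), if_pos (Or.inr (Or.inr rfl)), ht1]; rfl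
      · rw [hw' i, if_pos (Or.inl rfl), ht2]; rfl
      · rw [hw' (i + c), if_pos (Or.inr (Or.inl rfl)), ht3]; rfl
    · rw [hu' i, if_neg hij] at hui
      obtain ⟨ha, hb, hd⟩ := hA i hui
      exact ⟨hval _ ha, hval _ hb, hval _ hd⟩
  · intro i ⟨hx, hy⟩
    rw [hu' i] at hx
    rw [hu' (i + c)] at hy
    by_cases e1 : i = j <;> by_cases e2 : i + c = j
    · exact cast_two_ne hm (by linear_combination e2 - e1)
    · rw [if_neg e2] at hy
      have := (hA (i + c) hy).1
      rw [show i + c - c = i from by ring, e1, ht2] at this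
      cases this
    · rw [if_neg e1] at hx
      have := (hA i hx).2.2
      rw [e2, ht2] at this
      cases this
    · rw [if_neg e1] at hx
      rw [if_neg e2] at hy
      exact hC i ⟨hx, hy⟩

lemma phi01_closed (hm : 5 ≤ m) (ω : Fin 2 × Fin m → Bool) (hΦ : Phi01 ω)
    (v : Fin 2 × Fin m) (hv : IsLegal (petersen m 1) ω v) :
    Phi01 (move (petersen m 1) ω v) := by
  rw [legal_char_01 hm 1 (cast_one_ne hm) (cast_one_add hm) ω hΦ.1
    (htrip1_of_C hΦ.2.1)] at hv
  obtain ⟨h0, ht1, ht2, ht3⟩ := hv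
  have hveq : v = ((0 : Fin 2), v.2) := Prod.ext h0 rfl
  rw [hveq]
  exact phi01_closed' hm ω hΦ v.2 ht1 ht2 ht3

lemma phi10_closed (hm : 5 ≤ m) (ω : Fin 2 × Fin m → Bool)
    (hΦ : Phi10 ((2:ℕ) : Fin m) ω)
    (v : Fin 2 × Fin m) (hv : IsLegal (petersen m 2) ω v) :
    Phi10 ((2:ℕ) : Fin m) (move (petersen m 2) ω v) := by
  rw [legal_char_10 hm 2 (cast_two_ne hm) (cast_two_add hm) ω hΦ.1
    (hB_of_C'2 hΦ.2)] at hv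
  obtain ⟨h0, ht1, ht2, ht3⟩ := hv
  have hveq : v = ((1 : Fin 2), v.2) := Prod.ext h0 rfl
  rw [hveq]
  exact phi10_closed' hm ω hΦ v.2 ht1 ht2 ht3

/-- transport of moves along a vertex correspondence -/
lemma move_comp {V' : Type*} [Fintype V'] [DecidableEq V']
    (G : SimpleGraph V) [DecidableRel G.Adj] (G' : SimpleGraph V') [DecidableRel G'.Adj]
    (σ : V ≃ V') (v : V) (v' : V') (ω : V → Bool)
    (h : ∀ x, σ.symm x ∈ closedNbhd G v ↔ x ∈ closedNbhd G' v') :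
    (move G ω v) ∘ σ.symm = move G' (ω ∘ σ.symm) v' := by
  funext x
  simp only [Function.comp_apply, move]
  exact if_congr (h x) rfl rfl

/-- the ring-swapping equivalence -/
def swapV (m : ℕ) : (Fin 2 × Fin m) ≃ (Fin 2 × Fin m) where
  toFun x := (if x.1 = 0 then 1 else 0, x.2)
  invFun x := (if x.1 = 0 then 1 else 0, x.2)
  left_inv x := by
    obtain ⟨r, i⟩ := x
    fin_cases r <;> simp
  right_inv x := by
    obtain ⟨r, i⟩ := x
    fin_cases r <;> simp

lemma swapV_zero (j : Fin m) : swapV m ((0 : Fin 2), j) = ((1 : Fin 2), j) := by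
  simp [swapV]

lemma swapV_one (j : Fin m) : swapV m ((1 : Fin 2), j) = ((0 : Fin 2), j) := by
  simp [swapV]

lemma swapV_symm_zero (j : Fin m) : (swapV m).symm ((0 : Fin 2), j) = ((1 : Fin 2), j) := by
  simp [swapV, Equiv.symm]

lemma swapV_symm_one (j : Fin m) : (swapV m).symm ((1 : Fin 2), j) = ((0 : Fin 2), j) := by
  simp [swapV, Equiv.symm]

/-- Transfer between `P(m,1)` and itself under the ring swap. -/
lemma transfer_swap (hm : 5 ≤ m) (ω : Fin 2 × Fin m → Bool) :
    grundy (petersen m 1) ω = grundy (petersen m 1) (ω ∘ (swapV m).symm) := by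
  have hk1 := cast_one_ne hm
  have hkk1 := cast_one_add hm
  have hc1 : ((1:ℕ) : Fin m) = 1 := Nat.cast_one
  have hlegal : ∀ (ψ : Fin 2 × Fin m → Bool) (v : Fin 2 × Fin m),
      IsLegal (petersen m 1) ψ v ↔ IsLegal (petersen m 1) (ψ ∘ (swapV m).symm) (swapV m v) := by
    intro ψ v
    obtain ⟨s, j⟩ := v
    have hs : s = 0 ∨ s = 1 := by omega
    rcases hs with rfl | rfl
    · rw [swapV_zero, isLegal_outer hm 1 ψ j, isLegal_inner hm 1 hk1 hkk1 _ j]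
      simp only [Function.comp_apply, swapV_symm_zero, swapV_symm_one, hc1]
    · rw [swapV_one, isLegal_inner hm 1 hk1 hkk1 ψ j, isLegal_outer hm 1 _ j]
      simp only [Function.comp_apply, swapV_symm_zero, swapV_symm_one, hc1]
  have hmem : ∀ (v : Fin 2 × Fin m) (x : Fin 2 × Fin m),
      (swapV m).symm x ∈ closedNbhd (petersen m 1) v ↔
        x ∈ closedNbhd (petersen m 1) (swapV m v) := by
    intro v x
    obtain ⟨s, j⟩ := v
    obtain ⟨r, y⟩ := x
    have hs : s = 0 ∨ s = 1 := by omega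
    have hr : r = 0 ∨ r = 1 := by omega
    rcases hs with rfl | rfl <;> rcases hr with rfl | rfl <;>
      [ (rw [swapV_symm_zero, swapV_zero]); (rw [swapV_symm_one, swapV_zero]);
        (rw [swapV_symm_zero, swapV_one]); (rw [swapV_symm_one, swapV_one]) ] <;>
      rw [mem_nbhd_outer hm 1 , mem_nbhd_inner hm 1 hk1] <;>
      simp only [Prod.mk.injEq, (by decide : (((0:Fin 2)) = 1) = False),
        (by decide : (((1:Fin 2)) = 0) = False), (by decide : (((0:Fin 2)) = 0) = True),
        (by decide : (((1:Fin 2)) = 1) = True), true_and, false_and, false_or, or_false,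
        hc1] <;> tauto
  exact grundy_transfer (petersen m 1) (petersen m 1) (swapV m) (fun _ => True)
    (fun _ _ _ _ => trivial)
    (fun ψ _ v => hlegal ψ v)
    (fun ψ _ v _ => move_comp _ _ (swapV m) v (swapV m v) ψ (hmem v))
    ω trivial

/-- Transfer between `P(m,1)` and `P(m,2)` on `Phi01` positions. -/
lemma transfer_12 (hm : 5 ≤ m) (ω : Fin 2 × Fin m → Bool) (hΦ : Phi01 ω) :
    grundy (petersen m 1) ω = grundy (petersen m 2) ω := by
  have hmain := grundy_transfer (petersen m 1) (petersen m 2)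
    (Equiv.refl (Fin 2 × Fin m)) Phi01
    (fun ψ hψ v hv => phi01_closed hm ψ hψ v hv)
    (fun ψ hψ v => by
      rw [legal_char_01 hm 1 (cast_one_ne hm) (cast_one_add hm) ψ hψ.1
        (htrip1_of_C hψ.2.1)]
      have : ψ ∘ (Equiv.refl (Fin 2 × Fin m)).symm = ψ := rfl
      rw [this, Equiv.refl_apply,
        legal_char_01 hm 2 (cast_two_ne hm) (cast_two_add hm) ψ hψ.1
          (htrip2_of_B hψ.2.2)])
    (fun ψ hψ v hv => by
      have hchar := (legal_char_01 hm 1 (cast_one_ne hm) (cast_one_add hm) ψ hψ.1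
        (htrip1_of_C hψ.2.1) v).mp hv
      have hveq : v = ((0 : Fin 2), v.2) := Prod.ext hchar.1 rfl
      have : ψ ∘ (Equiv.refl (Fin 2 × Fin m)).symm = ψ := rfl
      rw [this, Equiv.refl_apply]
      show (move (petersen m 1) ψ v) ∘ id = move (petersen m 2) ψ v
      rw [Function.comp_id, hveq]
      funext x
      simp only [move]
      refine if_congr ?_ rfl rfl
      rw [mem_nbhd_outer hm 1 v.2 x, mem_nbhd_outer hm 2 v.2 x])
    ω hΦ
  have : ω ∘ (Equiv.refl (Fin 2 × Fin m)).symm = ω := rfl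
  rwa [this] at hmain

/-- rotation of the column indices -/
def rotV (m : ℕ) [NeZero m] (h : Fin m) : (Fin 2 × Fin m) ≃ (Fin 2 × Fin m) where
  toFun x := (x.1, x.2 + h)
  invFun x := (x.1, x.2 - h)
  left_inv x := by simp
  right_inv x := by simp

/-- reflection of the column indices -/
def negV (m : ℕ) [NeZero m] : (Fin 2 × Fin m) ≃ (Fin 2 × Fin m) where
  toFun x := (x.1, 1 - x.2)
  invFun x := (x.1, 1 - x.2)
  left_inv x := by
    obtain ⟨r, i⟩ := x
    simp only [Prod.mk.injEq]
    refine ⟨trivial, by ring⟩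
  right_inv x := by
    obtain ⟨r, i⟩ := x
    simp only [Prod.mk.injEq]
    refine ⟨trivial, by ring⟩

lemma phi01_init : Phi01 (P01 m) :=
  ⟨fun i hi => by simp [P01] at hi, fun i hi => by simp [P01] at hi,
    fun i hi => by simp [P01] at hi⟩

lemma phi10_init : Phi10 ((2:ℕ) : Fin m) (P10 m) :=
  ⟨fun i hi => by simp [P10] at hi, fun i hi => by simp [P10] at hi⟩

lemma rot_nbhd (hm : 5 ≤ m) (k : ℕ) (hk : ((k:ℕ) : Fin m) ≠ 0) (h : Fin m) :
    ∀ v, (closedNbhd (petersen m k) v).image (rotV m h) =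
      closedNbhd (petersen m k) (rotV m h v) := by
  intro ⟨s, j⟩
  have hs : s = 0 ∨ s = 1 := by omega
  rcases hs with rfl | rfl
  · show _ = closedNbhd (petersen m k) ((0 : Fin 2), j + h)
    rw [nbhd_outer_eq hm k j, nbhd_outer_eq hm k (j + h)]
    simp only [Finset.image_insert, Finset.image_singleton, rotV, Equiv.coe_fn_mk]
    rw [show j + 1 + h = j + h + 1 from by ring, show j - 1 + h = j + h - 1 from by ring]
  · show _ = closedNbhd (petersen m k) ((1 : Fin 2), j + h)
    rw [nbhd_inner_eq hm k hk j, nbhd_inner_eq hm k hk (j + h)]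
    simp only [Finset.image_insert, Finset.image_singleton, rotV, Equiv.coe_fn_mk]
    rw [show j + (k:Fin m) + h = j + h + (k:Fin m) from by ring,
      show j - (k:Fin m) + h = j + h - (k:Fin m) from by ring]

lemma neg_nbhd (hm : 5 ≤ m) (k : ℕ) (hk : ((k:ℕ) : Fin m) ≠ 0) :
    ∀ v, (closedNbhd (petersen m k) v).image (negV m) =
      closedNbhd (petersen m k) (negV m v) := by
  intro ⟨s, j⟩
  have hs : s = 0 ∨ s = 1 := by omega
  rcases hs with rfl | rfl
  · show _ = closedNbhd (petersen m k) ((0 : Fin 2), 1 - j)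
    rw [nbhd_outer_eq hm k j, nbhd_outer_eq hm k (1 - j)]
    simp only [Finset.image_insert, Finset.image_singleton, negV, Equiv.coe_fn_mk]
    rw [show (1:Fin m) - (j + 1) = (1 - j) - 1 from by ring,
      show (1:Fin m) - (j - 1) = (1 - j) + 1 from by ring,
      Finset.insert_comm ((0:Fin 2), (1 - j) - 1) ((0:Fin 2), (1 - j) + 1)]
  · show _ = closedNbhd (petersen m k) ((1 : Fin 2), 1 - j)
    rw [nbhd_inner_eq hm k hk j, nbhd_inner_eq hm k hk (1 - j)]
    simp only [Finset.image_insert, Finset.image_singleton, negV, Equiv.coe_fn_mk]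
    rw [show (1:Fin m) - (j + (k:Fin m)) = (1 - j) - (k:Fin m) from by ring,
      show (1:Fin m) - (j - (k:Fin m)) = (1 - j) + (k:Fin m) from by ring,
      Finset.insert_comm ((1:Fin 2), (1 - j) - (k:Fin m)) ((1:Fin 2), (1 - j) + (k:Fin m))]

lemma disj_outer (hm : 5 ≤ m) (k : ℕ) (h : Fin m) (hd0 : h ≠ 0) (hd1 : h + 1 ≠ 0)
    (hd2 : h - 1 ≠ 0) (hd3 : h + 2 ≠ 0) (hd4 : h - 2 ≠ 0) (j : Fin m) :
    Disjoint (closedNbhd (petersen m k) ((0 : Fin 2), j))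
      (closedNbhd (petersen m k) ((0 : Fin 2), j + h)) := by
  rw [Finset.disjoint_left]
  intro x hx hx'
  rw [mem_nbhd_outer hm k j] at hx
  rw [mem_nbhd_outer hm k (j + h)] at hx'
  rcases hx with rfl | rfl | rfl | rfl <;> rcases hx' with h' | h' | h' | h' <;>
    rw [Prod.mk.injEq] at h' <;>
    first
    | exact absurd h'.1 (by decide)
    | exact hd0 (by linear_combination h'.2)
    | exact hd0 (by linear_combination -h'.2)
    | exact hd1 (by linear_combination h'.2)
    | exact hd1 (by linear_combination -h'.2)
    | exact hd2 (by linear_combination h'.2)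
    | exact hd2 (by linear_combination -h'.2)
    | exact hd3 (by linear_combination h'.2)
    | exact hd3 (by linear_combination -h'.2)
    | exact hd4 (by linear_combination h'.2)
    | exact hd4 (by linear_combination -h'.2)

lemma add_self_ne (hme : m % 2 = 0) (x : Fin m) (hx : (x:ℕ) % 2 = 1) (j : Fin m) :
    j + j ≠ x := by
  intro hq
  have hv := congrArg Fin.val hq
  have hv2 : ((j:ℕ) + (j:ℕ)) % m = (x:ℕ) := by rw [← hv]; rfl
  have h2 : ((j:ℕ) + (j:ℕ)) % m % 2 = ((j:ℕ) + (j:ℕ)) % 2 :=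
    Nat.mod_mod_of_dvd _ (by omega)
  omega

lemma disj_inner_neg (hm : 5 ≤ m) (hme : m % 2 = 0) (j : Fin m) :
    Disjoint (closedNbhd (petersen m 2) ((1 : Fin 2), j))
      (closedNbhd (petersen m 2) ((1 : Fin 2), 1 - j)) := by
  set c : Fin m := ((2:ℕ) : Fin m) with hc
  have hval : ∀ n : ℕ, n < m → (((n:ℕ) : Fin m) : ℕ) = n := by
    intro n hn
    rw [Fin.val_natCast, Nat.mod_eq_of_lt hn]
  have q0 : ∀ j : Fin m, j + j ≠ 1 := by
    intro j
    have h1 : (1 : Fin m) = ((1:ℕ) : Fin m) := by rw [Nat.cast_one]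
    rw [h1]
    exact add_self_ne hme _ (by rw [hval 1 (by omega)]) j
  have q1 : ∀ j : Fin m, j + j ≠ 1 + c := by
    intro j
    have h1 : (1 : Fin m) + c = ((3:ℕ) : Fin m) := by rw [hc]; push_cast; ring
    rw [h1]
    exact add_self_ne hme _ (by rw [hval 3 (by omega)]) j
  have q2 : ∀ j : Fin m, j + j ≠ 1 - c := by
    intro j
    have h1 : (1 : Fin m) - c = ((m - 1 : ℕ) : Fin m) := by
      rw [Nat.cast_sub (by omega), Fin.natCast_self, Nat.cast_one, hc]
      push_cast
      ring
    rw [h1]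
    exact add_self_ne hme _ (by rw [hval (m-1) (by omega)]; omega) j
  have q3 : ∀ j : Fin m, j + j ≠ 1 + c + c := by
    intro j
    have h1 : (1 : Fin m) + c + c = ((5:ℕ) : Fin m) := by rw [hc]; push_cast; ring
    rw [h1]
    exact add_self_ne hme _ (by rw [hval 5 (by omega)]) j
  have q4 : ∀ j : Fin m, j + j ≠ 1 - c - c := by
    intro j
    have h1 : (1 : Fin m) - c - c = ((m - 3 : ℕ) : Fin m) := by
      rw [Nat.cast_sub (by omega), Fin.natCast_self, hc]
      push_cast
      ring
    rw [h1]
    exact add_self_ne hme _ (by rw [hval (m-3) (by omega)]; omega) j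
  rw [Finset.disjoint_left]
  intro x hx hx'
  rw [mem_nbhd_inner hm 2 (cast_two_ne hm) j] at hx
  rw [mem_nbhd_inner hm 2 (cast_two_ne hm) (1 - j)] at hx'
  rcases hx with rfl | rfl | rfl | rfl <;> rcases hx' with h' | h' | h' | h' <;>
    rw [Prod.mk.injEq] at h' <;>
    first
    | exact absurd h'.1 (by decide)
    | exact q0 j (by linear_combination h'.2)
    | exact q1 j (by linear_combination h'.2)
    | exact q2 j (by linear_combination h'.2)
    | exact q3 j (by linear_combination h'.2)
    | exact q4 j (by linear_combination h'.2)

lemma grundy_P01_even (hm : 5 ≤ m) (hme : m % 2 = 0) :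
    grundy (petersen m 1) (P01 m) = 0 := by
  have hm6 : 6 ≤ m := by omega
  set h : Fin m := ((m / 2 : ℕ) : Fin m) with hh
  have hd0 : h ≠ 0 := natCast_ne_zero _ (by omega) (by omega)
  have hd1 : h + 1 ≠ 0 := by
    rw [show h + 1 = ((m/2 + 1 : ℕ) : Fin m) from by rw [hh]; push_cast; ring]
    exact natCast_ne_zero _ (by omega) (by omega)
  have hd2 : h - 1 ≠ 0 := by
    rw [show h - 1 = ((m/2 - 1 : ℕ) : Fin m) from by
      rw [Nat.cast_sub (by omega), Nat.cast_one, hh]]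
    exact natCast_ne_zero _ (by omega) (by omega)
  have hd3 : h + 2 ≠ 0 := by
    rw [show h + 2 = ((m/2 + 2 : ℕ) : Fin m) from by rw [hh]; push_cast; ring]
    exact natCast_ne_zero _ (by omega) (by omega)
  have hd4 : h - 2 ≠ 0 := by
    rw [show h - 2 = ((m/2 - 2 : ℕ) : Fin m) from by
      rw [Nat.cast_sub (by omega), hh]; push_cast; ring]
    exact natCast_ne_zero _ (by omega) (by omega)
  have hh0 : h + h = 0 := by
    rw [show h + h = ((m/2 + m/2 : ℕ) : Fin m) from by rw [hh]; push_cast; ring,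
      show m/2 + m/2 = m from by omega]
    exact Fin.natCast_self m
  apply grundy_mirror (petersen m 1) (rotV m h)
    (fun x => by
      obtain ⟨r, i⟩ := x
      simp only [rotV, Equiv.coe_fn_mk, Prod.mk.injEq]
      refine ⟨trivial, by rw [add_assoc, hh0, add_zero]⟩)
    Phi01 (phi01_closed hm) (rot_nbhd hm 1 (cast_one_ne hm) h)
    (fun ω hΦ hsym v hv => by
      rw [legal_char_01 hm 1 (cast_one_ne hm) (cast_one_add hm) ω hΦ.1
        (htrip1_of_C hΦ.2.1)] at hv
      have hveq : v = ((0 : Fin 2), v.2) := Prod.ext hv.1 rfl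
      rw [hveq, show (rotV m h) ((0 : Fin 2), v.2) = ((0 : Fin 2), v.2 + h) from rfl]
      exact disj_outer hm 1 h hd0 hd1 hd2 hd3 hd4 v.2)
    (P01 m) phi01_init (fun x => rfl)

lemma grundy_P10_2_even (hm : 5 ≤ m) (hme : m % 2 = 0) :
    grundy (petersen m 2) (P10 m) = 0 := by
  apply grundy_mirror (petersen m 2) (negV m)
    (fun x => by
      obtain ⟨r, i⟩ := x
      simp only [negV, Equiv.coe_fn_mk, Prod.mk.injEq]
      refine ⟨trivial, by ring⟩)
    (Phi10 ((2:ℕ) : Fin m)) (phi10_closed hm) (neg_nbhd hm 2 (cast_two_ne hm))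
    (fun ω hΦ hsym v hv => by
      rw [legal_char_10 hm 2 (cast_two_ne hm) (cast_two_add hm) ω hΦ.1
        (hB_of_C'2 hΦ.2)] at hv
      have hveq : v = ((1 : Fin 2), v.2) := Prod.ext hv.1 rfl
      rw [hveq, show (negV m) ((1 : Fin 2), v.2) = ((1 : Fin 2), 1 - v.2) from rfl]
      exact disj_inner_neg hm hme v.2)
    (P10 m) phi10_init (fun x => rfl)

/-- scaling equivalence, for odd `m` -/
def scaleV (m : ℕ) [NeZero m] (t : Fin m) (h2t : (2 : Fin m) * t = 1) :
    (Fin 2 × Fin m) ≃ (Fin 2 × Fin m) where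
  toFun x := (x.1, t * x.2)
  invFun x := (x.1, 2 * x.2)
  left_inv x := Prod.ext rfl (by
    show 2 * (t * x.2) = x.2
    rw [← mul_assoc, h2t, one_mul])
  right_inv x := Prod.ext rfl (by
    show t * (2 * x.2) = x.2
    rw [← mul_assoc, mul_comm t 2, h2t, one_mul])

lemma grundy_P10_2_odd (hm : 5 ≤ m) (hmo : m % 2 = 1) :
    grundy (petersen m 2) (P10 m) = grundy (petersen m 1) (P10 m) := by
  set t : Fin m := (((m + 1) / 2 : ℕ) : Fin m) with hht
  have h2t : (2 : Fin m) * t = 1 := by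
    rw [show (2 : Fin m) * t = ((2 * ((m+1)/2) : ℕ) : Fin m) from by rw [hht]; push_cast; ring,
      show 2 * ((m+1)/2) = m + 1 from by omega, Nat.cast_add, Fin.natCast_self,
      Nat.cast_one, zero_add]
  set σ := scaleV m t h2t with hσ
  have hsymm : ∀ s : Fin 2, ∀ y : Fin m, σ.symm (s, y) = (s, 2 * y) := fun s y => rfl
  have biject : ∀ a b : Fin m, 2 * a = b ↔ a = t * b := by
    intro a b
    constructor
    · intro h
      rw [← h, ← mul_assoc, mul_comm t 2, h2t, one_mul]
    · intro h
      rw [h, ← mul_assoc, h2t, one_mul]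
  have hc1 : ((1:ℕ) : Fin m) = 1 := Nat.cast_one
  have hc2 : ((2:ℕ) : Fin m) = 2 := Nat.cast_ofNat
  have e0 : ∀ y : Fin m, 2 * (t * y) = y := fun y => by rw [← mul_assoc, h2t, one_mul]
  have e1 : ∀ y : Fin m, 2 * (t * y - ((1:ℕ) : Fin m)) = y - ((2:ℕ) : Fin m) := by
    intro y
    rw [hc1, hc2, mul_sub, ← mul_assoc, h2t, one_mul, mul_one]
  have e2 : ∀ y : Fin m, 2 * (t * y + ((1:ℕ) : Fin m)) = y + ((2:ℕ) : Fin m) := by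
    intro y
    rw [hc1, hc2, mul_add, ← mul_assoc, h2t, one_mul, mul_one]
  have hPhiT : ∀ ω, Phi10 ((2:ℕ) : Fin m) ω → Phi10 ((1:ℕ) : Fin m) (ω ∘ σ.symm) := by
    intro ω ⟨hA, hC⟩
    constructor
    · intro y hy
      have hy' : ω ((0 : Fin 2), 2 * y) = true := hy
      obtain ⟨ha, hb, hc⟩ := hA (2 * y) hy'
      refine ⟨?_, ?_, ?_⟩
      · show ω ((1 : Fin 2), 2 * (y - ((1:ℕ) : Fin m))) = false
        rw [show 2 * (y - ((1:ℕ) : Fin m)) = 2 * y - ((2:ℕ) : Fin m) from by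
          rw [hc1, hc2, mul_sub, mul_one]]
        exact ha
      · exact hb
      · show ω ((1 : Fin 2), 2 * (y + ((1:ℕ) : Fin m))) = false
        rw [show 2 * (y + ((1:ℕ) : Fin m)) = 2 * y + ((2:ℕ) : Fin m) from by
          rw [hc1, hc2, mul_add, mul_one]]
        exact hc
    · intro y ⟨hx, hy⟩
      refine hC (2 * y) ⟨hx, ?_⟩
      have : ω ((0 : Fin 2), 2 * (y + ((1:ℕ) : Fin m))) = true := hy
      rwa [show 2 * (y + ((1:ℕ) : Fin m)) = 2 * y + ((2:ℕ) : Fin m) from by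
        rw [hc1, hc2, mul_add, mul_one]] at this
  have hlegal : ∀ ω, Phi10 ((2:ℕ) : Fin m) ω → ∀ v,
      IsLegal (petersen m 2) ω v ↔ IsLegal (petersen m 1) (ω ∘ σ.symm) (σ v) := by
    intro ω hΦ v
    rw [legal_char_10 hm 2 (cast_two_ne hm) (cast_two_add hm) ω hΦ.1 (hB_of_C'2 hΦ.2) v,
      legal_char_10 hm 1 (cast_one_ne hm) (cast_one_add hm) (ω ∘ σ.symm) (hPhiT ω hΦ).1
        (hB_of_C'1 (hPhiT ω hΦ).2) (σ v)]
    have f1 : (ω ∘ σ.symm) ((1 : Fin 2), (σ v).2 - ((1:ℕ) : Fin m))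
        = ω ((1 : Fin 2), v.2 - ((2:ℕ) : Fin m)) := by
      show ω ((1 : Fin 2), 2 * (t * v.2 - ((1:ℕ) : Fin m))) = _
      rw [e1]
    have f2 : (ω ∘ σ.symm) ((1 : Fin 2), (σ v).2) = ω ((1 : Fin 2), v.2) := by
      show ω ((1 : Fin 2), 2 * (t * v.2)) = _
      rw [e0]
    have f3 : (ω ∘ σ.symm) ((1 : Fin 2), (σ v).2 + ((1:ℕ) : Fin m))
        = ω ((1 : Fin 2), v.2 + ((2:ℕ) : Fin m)) := by
      show ω ((1 : Fin 2), 2 * (t * v.2 + ((1:ℕ) : Fin m))) = _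
      rw [e2]
    rw [f1, f2, f3, show (σ v).1 = v.1 from rfl]
  have hmove : ∀ ω, Phi10 ((2:ℕ) : Fin m) ω → ∀ v, IsLegal (petersen m 2) ω v →
      (move (petersen m 2) ω v) ∘ σ.symm = move (petersen m 1) (ω ∘ σ.symm) (σ v) := by
    intro ω hΦ v hv
    rw [legal_char_10 hm 2 (cast_two_ne hm) (cast_two_add hm) ω hΦ.1
      (hB_of_C'2 hΦ.2) v] at hv
    have hveq : v = ((1 : Fin 2), v.2) := Prod.ext hv.1 rfl
    rw [hveq]
    apply move_comp
    intro x
    obtain ⟨s, y⟩ := x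
    show ((s, 2 * y) : Fin 2 × Fin m) ∈ _ ↔ _
    rw [show σ ((1 : Fin 2), v.2) = ((1 : Fin 2), t * v.2) from rfl,
      mem_nbhd_inner hm 2 (cast_two_ne hm) v.2, mem_nbhd_inner hm 1 (cast_one_ne hm)
      (t * v.2)]
    have b0 : (2 * y = v.2) ↔ (y = t * v.2) := biject y v.2
    have teq1 : t * (v.2 + ((2:ℕ) : Fin m)) = t * v.2 + ((1:ℕ) : Fin m) := by
      rw [hc2, hc1, mul_add, mul_comm t 2, h2t]
    have teq2 : t * (v.2 - ((2:ℕ) : Fin m)) = t * v.2 - ((1:ℕ) : Fin m) := by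
      rw [hc2, hc1, mul_sub, mul_comm t 2, h2t]
    have b1 : (2 * y = v.2 + ((2:ℕ) : Fin m)) ↔ (y = t * v.2 + ((1:ℕ) : Fin m)) :=
      (biject y _).trans (by rw [teq1])
    have b2 : (2 * y = v.2 - ((2:ℕ) : Fin m)) ↔ (y = t * v.2 - ((1:ℕ) : Fin m)) :=
      (biject y _).trans (by rw [teq2])
    simp only [Prod.mk.injEq, b0, b1, b2]
  have hmain := grundy_transfer (petersen m 2) (petersen m 1) σ
    (Phi10 ((2:ℕ) : Fin m)) (fun ψ hψ v hv => phi10_closed hm ψ hψ v hv)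
    hlegal hmove (P10 m) phi10_init
  have hP10 : (P10 m) ∘ σ.symm = P10 m := rfl
  rwa [hP10] at hmain

lemma P01_swap : (P01 m) ∘ (swapV m).symm = P10 m := by
  funext x
  obtain ⟨r, y⟩ := x
  fin_cases r <;> rfl

end Petersen

end S19



/-- for `m ≥ 5`, the four Toggle positions `P_{0,1}(m,1)`,
`P_{1,0}(m,1)`, `P_{0,1}(m,2)`, `P_{1,0}(m,2)` all have the same Nimber. -/
theorem statement19 (m : ℕ) (hm : 5 ≤ m) :
    Toggle.grundy (Toggle.petersen m 1) (Toggle.P01 m)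
        = Toggle.grundy (Toggle.petersen m 1) (Toggle.P10 m) ∧
    Toggle.grundy (Toggle.petersen m 1) (Toggle.P10 m)
        = Toggle.grundy (Toggle.petersen m 2) (Toggle.P01 m) ∧
    Toggle.grundy (Toggle.petersen m 2) (Toggle.P01 m)
        = Toggle.grundy (Toggle.petersen m 2) (Toggle.P10 m) := by
  haveI : NeZero m := ⟨by omega⟩
  have e1 : Toggle.grundy (Toggle.petersen m 1) (Toggle.P01 m)
      = Toggle.grundy (Toggle.petersen m 1) (Toggle.P10 m) := by
    have h := S19.transfer_swap hm (Toggle.P01 m)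
    rwa [S19.P01_swap] at h
  have e2 : Toggle.grundy (Toggle.petersen m 1) (Toggle.P01 m)
      = Toggle.grundy (Toggle.petersen m 2) (Toggle.P01 m) :=
    S19.transfer_12 hm _ S19.phi01_init
  refine ⟨e1, by rw [← e1, e2], ?_⟩
  by_cases hme : m % 2 = 0
  · have z1 := S19.grundy_P01_even hm hme
    have z2 := S19.grundy_P10_2_even hm hme
    rw [← e2, z1]
    exact z2.symm
  · have hmo : m % 2 = 1 := by omega
    have e3 := S19.grundy_P10_2_odd hm hmo
    rw [← e2, e1, e3]
end
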